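/- arXiv:1004.2027 — 3 statements merged into one kernel-verified Lean document; each statement's English description precedes it below -/
import Mathlib

section
/- Consider the exact DPP iteration with parameter η > 0 started from an action preference function Ψ_0 with ‖Ψ_0‖ ≤ V_max. Then for every k ≥ 0, the policy π_k induced by DPP at round k satisfies ‖Q* − Q^{π_k}‖ ≤ 2γ(4 V_max + log(L)/η) / ((1−γ)² (k+1)). -/
open Finset Real Filter

variable {X A : Type*}

/-- `(πQ)(x) = Σ_a π(a|x) Q(x,a)`. -/
noncomputable def polApply [Fintype A] (pol : X → A → ℝ) (Q : X → A → ℝ) : X → ℝ :=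
  fun x => ∑ a, pol x a * Q x a

/-- Bellman operator `T^π`. -/
noncomputable def bellman [Fintype X] [Fintype A]
    (P : X → A → X → ℝ) (r : X → A → ℝ) (γ : ℝ) (pol : X → A → ℝ)
    (Q : X → A → ℝ) : X → A → ℝ :=
  fun x a => r x a + γ * ∑ x', ∑ a', P x a x' * pol x' a' * Q x' a'

/-- Bellman optimality operator `T`. -/
noncomputable def bellmanOpt [Fintype X] [Fintype A] [Nonempty A]
    (P : X → A → X → ℝ) (r : X → A → ℝ) (γ : ℝ) (Q : X → A → ℝ) : X → A → ℝ :=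
  fun x a => r x a + γ * ∑ x', P x a x' * (Finset.univ.sup' Finset.univ_nonempty (Q x'))

/-- Soft-max policy associated with action preferences `Ψ` at inverse temperature `η`. -/
noncomputable def softmaxPol [Fintype A] (η : ℝ) (Ψ : X → A → ℝ) : X → A → ℝ :=
  fun x a => Real.exp (η * Ψ x a) / ∑ a', Real.exp (η * Ψ x a')

/-- Supremum norm over state-action pairs. -/
noncomputable def supNorm [Fintype X] [Fintype A] [Nonempty X] [Nonempty A]
    (Q : X → A → ℝ) : ℝ :=
  Finset.univ.sup' Finset.univ_nonempty (fun p : X × A => |Q p.1 p.2|)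

section helpers
variable {ι : Type*} [Fintype ι]

lemma wavg_le {w f : ι → ℝ} {b : ℝ} (hw : ∀ i, 0 ≤ w i) (hw1 : ∑ i, w i = 1)
    (hf : ∀ i, f i ≤ b) : ∑ i, w i * f i ≤ b := by
  calc ∑ i, w i * f i ≤ ∑ i, w i * b :=
        Finset.sum_le_sum (fun i _ => mul_le_mul_of_nonneg_left (hf i) (hw i))
    _ = b := by rw [← Finset.sum_mul, hw1, one_mul]

lemma le_wavg {w f : ι → ℝ} {b : ℝ} (hw : ∀ i, 0 ≤ w i) (hw1 : ∑ i, w i = 1)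
    (hf : ∀ i, b ≤ f i) : b ≤ ∑ i, w i * f i := by
  calc (b:ℝ) = ∑ i, w i * b := by rw [← Finset.sum_mul, hw1, one_mul]
    _ ≤ ∑ i, w i * f i :=
        Finset.sum_le_sum (fun i _ => mul_le_mul_of_nonneg_left (hf i) (hw i))

lemma abs_wavg_le {w f : ι → ℝ} {b : ℝ} (hw : ∀ i, 0 ≤ w i) (hw1 : ∑ i, w i = 1)
    (hf : ∀ i, |f i| ≤ b) : |∑ i, w i * f i| ≤ b := by
  calc |∑ i, w i * f i| ≤ ∑ i, |w i * f i| := Finset.abs_sum_le_sum_abs _ _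
    _ = ∑ i, w i * |f i| := by
        refine Finset.sum_congr rfl fun i _ => ?_
        rw [abs_mul, abs_of_nonneg (hw i)]
    _ ≤ b := wavg_le hw hw1 hf

lemma wavg_mono {w f g : ι → ℝ} (hw : ∀ i, 0 ≤ w i) (hf : ∀ i, f i ≤ g i) :
    ∑ i, w i * f i ≤ ∑ i, w i * g i :=
  Finset.sum_le_sum (fun i _ => mul_le_mul_of_nonneg_left (hf i) (hw i))

end helpers

section softmax
variable [Fintype A] [Nonempty A] (η : ℝ) (Ψ : X → A → ℝ) (x : X)

lemma softmax_Zpos : 0 < ∑ a', Real.exp (η * Ψ x a') :=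
  Finset.sum_pos (fun _ _ => Real.exp_pos _) Finset.univ_nonempty

lemma softmax_pos : ∀ a, 0 < softmaxPol η Ψ x a := fun _ =>
  div_pos (Real.exp_pos _) (softmax_Zpos η Ψ x)

lemma softmax_sum_one : ∑ a, softmaxPol η Ψ x a = 1 := by
  unfold softmaxPol
  rw [← Finset.sum_div, div_self (ne_of_gt (softmax_Zpos η Ψ x))]

lemma softmax_wavg_ge (hη : 0 < η) :
    Finset.univ.sup' Finset.univ_nonempty (Ψ x) - Real.log (Fintype.card A) / η ≤
      ∑ a, softmaxPol η Ψ x a * Ψ x a := by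
  have hZ : 0 < ∑ a', Real.exp (η * Ψ x a') := softmax_Zpos η Ψ x
  set Z := ∑ a', Real.exp (η * Ψ x a') with hZdef
  set w : A → ℝ := softmaxPol η Ψ x with hwdef
  have hwpos : ∀ a, 0 < w a := softmax_pos η Ψ x
  have hw1 : ∑ a, w a = 1 := softmax_sum_one η Ψ x
  have hlog : ∀ a, η * Ψ x a = Real.log (w a) + Real.log Z := by
    intro a
    have hwa : w a = Real.exp (η * Ψ x a) / Z := rfl
    rw [hwa, Real.log_div (ne_of_gt (Real.exp_pos _)) (ne_of_gt hZ), Real.log_exp]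
    ring
  have hent : - Real.log (Fintype.card A) ≤ ∑ a, w a * Real.log (w a) := by
    have hjen := (strictConcaveOn_log_Ioi.concaveOn).le_map_sum
      (t := Finset.univ) (w := w) (p := fun a => (w a)⁻¹)
      (fun a _ => (hwpos a).le) hw1 (fun a _ => Set.mem_Ioi.2 (inv_pos.2 (hwpos a)))
    have hsum : ∑ i : A, w i • ((fun a => (w a)⁻¹) i) = (Fintype.card A : ℝ) := by
      simp only [smul_eq_mul]
      rw [Finset.sum_congr rfl (fun a _ => mul_inv_cancel₀ (ne_of_gt (hwpos a)))]
      simp [Finset.card_univ]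
    rw [hsum] at hjen
    have hneg : ∑ i : A, w i • Real.log ((w i)⁻¹) = - ∑ a, w a * Real.log (w a) := by
      simp only [smul_eq_mul, Real.log_inv, mul_neg, Finset.sum_neg_distrib]
    rw [hneg] at hjen
    linarith
  obtain ⟨a0, -, ha0⟩ := Finset.exists_mem_eq_sup' Finset.univ_nonempty (Ψ x)
  have hZge : η * Finset.univ.sup' Finset.univ_nonempty (Ψ x) ≤ Real.log Z := by
    rw [Real.le_log_iff_exp_le hZ, ha0]
    exact Finset.single_le_sum (f := fun a => Real.exp (η * Ψ x a))
      (fun a _ => (Real.exp_pos _).le) (Finset.mem_univ a0)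
  have hkey : η * ∑ a, w a * Ψ x a = (∑ a, w a * Real.log (w a)) + Real.log Z := by
    rw [Finset.mul_sum]
    calc ∑ a, η * (w a * Ψ x a) = ∑ a, (w a * Real.log (w a) + w a * Real.log Z) := by
          refine Finset.sum_congr rfl fun a _ => ?_
          rw [show η * (w a * Ψ x a) = w a * (η * Ψ x a) by ring, hlog a]; ring
      _ = (∑ a, w a * Real.log (w a)) + Real.log Z := by
          rw [Finset.sum_add_distrib, ← Finset.sum_mul, hw1, one_mul]
  have h2 : η * (Finset.univ.sup' Finset.univ_nonempty (Ψ x) - Real.log (Fintype.card A) / η)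
      ≤ η * ∑ a, w a * Ψ x a := by
    rw [hkey, mul_sub, mul_div_cancel₀ _ (ne_of_gt hη)]
    linarith
  exact le_of_mul_le_mul_left h2 hη

end softmax

section supnorm
variable [Fintype X] [Fintype A] [Nonempty X] [Nonempty A]

lemma abs_le_supNorm (Q : X → A → ℝ) (x : X) (a : A) : |Q x a| ≤ supNorm Q :=
  Finset.le_sup' (fun p : X × A => |Q p.1 p.2|) (Finset.mem_univ (x, a))

lemma supNorm_le {Q : X → A → ℝ} {b : ℝ} (h : ∀ x a, |Q x a| ≤ b) : supNorm Q ≤ b :=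
  Finset.sup'_le _ _ fun p _ => h p.1 p.2

end supnorm
set_option maxHeartbeats 2000000 in
/-- Theorem 1 of the paper: `ℓ∞`-norm performance-loss bound of exact DPP. -/
theorem dpp_performance_loss_bound
    {X A : Type*} [Fintype X] [Fintype A] [Nonempty X] [Nonempty A]
    (P : X → A → X → ℝ) (hP0 : ∀ x a x', 0 ≤ P x a x') (hP1 : ∀ x a, ∑ x', P x a x' = 1)
    (r : X → A → ℝ) (Rmax : ℝ) (hR : 0 < Rmax) (hr : ∀ x a, |r x a| ≤ Rmax)
    (γ : ℝ) (hγ0 : 0 ≤ γ) (hγ1 : γ < 1)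
    (Vmax : ℝ) (hV : Vmax = Rmax / (1 - γ))
    (η : ℝ) (hη : 0 < η)
    (Ψ : ℕ → X → A → ℝ) (hΨ0 : supNorm (Ψ 0) ≤ Vmax)
    (pol : ℕ → X → A → ℝ) (hpol : ∀ k, pol k = softmaxPol η (Ψ k))
    (hΨ : ∀ k x a, Ψ (k + 1) x a =
      Ψ k x a + bellman P r γ (pol k) (Ψ k) x a - polApply (pol k) (Ψ k) x)
    (Qstar : X → A → ℝ) (hQstar : bellmanOpt P r γ Qstar = Qstar)
    (Qpi : ℕ → X → A → ℝ) (hQpi : ∀ k, bellman P r γ (pol k) (Qpi k) = Qpi k) :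
    ∀ k : ℕ, supNorm (fun x a => Qstar x a - Qpi k x a) ≤
      2 * γ * (4 * Vmax + Real.log (Fintype.card A) / η) /
        ((1 - γ) ^ 2 * (k + 1)) := by
  have hγ' : (0:ℝ) < 1 - γ := by linarith
  have hVpos : 0 < Vmax := by rw [hV]; positivity
  set c : ℝ := Real.log (Fintype.card A) / η with hc
  have hc0 : 0 ≤ c := by
    apply div_nonneg _ hη.le
    apply Real.log_nonneg
    exact_mod_cast Fintype.card_pos (α := A)
  set Vk : ℕ → X → ℝ := fun k x => ∑ a, pol k x a * Ψ k x a with hVkdef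
  set S : ℕ → X → ℝ := fun k x => ∑ j ∈ Finset.range k, Vk j x with hSdef
  set vstar : X → ℝ := fun x => Finset.univ.sup' Finset.univ_nonempty (Qstar x) with hvstardef
  have hpol0 : ∀ k x a, 0 ≤ pol k x a := fun k x a => by
    rw [hpol]; exact (softmax_pos η (Ψ k) x a).le
  have hpol1 : ∀ k x, ∑ a, pol k x a = 1 := fun k x => by
    rw [hpol]; exact softmax_sum_one η (Ψ k) x
  have hVub : ∀ k x, Vk k x ≤ Finset.univ.sup' Finset.univ_nonempty (Ψ k x) := fun k x =>
    wavg_le (hpol0 k x) (hpol1 k x) (fun a => Finset.le_sup' _ (Finset.mem_univ a))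
  have hVlb : ∀ k x, Finset.univ.sup' Finset.univ_nonempty (Ψ k x) - c ≤ Vk k x := by
    intro k x
    have := softmax_wavg_ge η (Ψ k) x hη
    rw [← hpol] at this
    exact this
  have hΨ0b : ∀ x a, |Ψ 0 x a| ≤ Vmax := fun x a =>
    le_trans (abs_le_supNorm (Ψ 0) x a) hΨ0
  -- bound on Qstar
  have hQsb : ∀ x a, |Qstar x a| ≤ Vmax := by
    have habs_v : ∀ x', |vstar x'| ≤ supNorm Qstar := by
      intro x'
      obtain ⟨a', -, ha'⟩ := Finset.exists_mem_eq_sup' Finset.univ_nonempty (Qstar x')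
      show |Finset.univ.sup' Finset.univ_nonempty (Qstar x')| ≤ _
      rw [ha']
      exact abs_le_supNorm Qstar x' a'
    have hs : supNorm Qstar ≤ Rmax + γ * supNorm Qstar := by
      refine supNorm_le fun x a => ?_
      have h1 : Qstar x a = r x a + γ * ∑ x', P x a x' * vstar x' := by
        conv_lhs => rw [← hQstar]
        rfl
      rw [h1]
      have h2 : |∑ x', P x a x' * vstar x'| ≤ supNorm Qstar :=
        abs_wavg_le (hP0 x a) (hP1 x a) habs_v
      calc |r x a + γ * ∑ x', P x a x' * vstar x'|
          ≤ |r x a| + |γ * ∑ x', P x a x' * vstar x'| := abs_add_le _ _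
        _ ≤ Rmax + γ * supNorm Qstar := by
            rw [abs_mul, abs_of_nonneg hγ0]
            exact add_le_add (hr x a) (mul_le_mul_of_nonneg_left h2 hγ0)
    intro x a
    refine le_trans (abs_le_supNorm Qstar x a) ?_
    rw [hV, le_div_iff₀ hγ']
    nlinarith [hs]
  have hvb : ∀ x, |vstar x| ≤ Vmax := by
    intro x
    obtain ⟨a', -, ha'⟩ := Finset.exists_mem_eq_sup' Finset.univ_nonempty (Qstar x)
    show |Finset.univ.sup' Finset.univ_nonempty (Qstar x)| ≤ _
    rw [ha']; exact hQsb x a'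
  -- the key identity
  have hid : ∀ k x a, Ψ k x a = k * Qstar x a + Ψ 0 x a
      + γ * (∑ x', P x a x' * (S k x' - k * vstar x')) - S k x := by
    intro k
    induction k with
    | zero =>
      intro x a
      have hS0 : ∀ x', S 0 x' = 0 := fun x' => by simp [hSdef]
      simp [hS0]
    | succ k ih =>
      intro x a
      have hb : bellman P r γ (pol k) (Ψ k) x a = r x a + γ * ∑ x', P x a x' * Vk k x' := by
        unfold bellman
        congr 1
        congr 1
        refine Finset.sum_congr rfl fun x' _ => ?_
        rw [hVkdef]
        rw [Finset.mul_sum]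
        exact Finset.sum_congr rfl fun a' _ => by ring
      have hr' : r x a = Qstar x a - γ * ∑ x', P x a x' * vstar x' := by
        conv_rhs => rw [← hQstar]
        unfold bellmanOpt
        rw [hvstardef]
        ring
      have hSsucc : ∀ x', S (k+1) x' = S k x' + Vk k x' := fun x' => by
        rw [hSdef]; exact Finset.sum_range_succ _ _
      have hVkx : polApply (pol k) (Ψ k) x = Vk k x := rfl
      have hsum : ∑ x', P x a x' * (S (k+1) x' - (↑k+1) * vstar x')
          = (∑ x', P x a x' * (S k x' - ↑k * vstar x'))
            + (∑ x', P x a x' * Vk k x') - (∑ x', P x a x' * vstar x') := by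
        rw [← Finset.sum_add_distrib, ← Finset.sum_sub_distrib]
        refine Finset.sum_congr rfl fun x' _ => ?_
        rw [hSsucc x']; ring
      rw [hΨ k x a, hb, hr', ih x a, hVkx, hSsucc x]
      push_cast
      rw [hsum]
      ring
  -- boundedness of the running sums
  set su : ℝ := 2 * Vmax / (1 - γ) with hsudef
  set sl : ℝ := (2 * Vmax + c) / (1 - γ) with hsldef
  have hsu0 : 0 ≤ su := by positivity
  have hsl0 : 0 ≤ sl := by positivity
  have hsu_eq : (1 - γ) * su = 2 * Vmax := by
    rw [hsudef]; field_simp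
  have hsl_eq : (1 - γ) * sl = 2 * Vmax + c := by
    rw [hsldef]; field_simp
  have hA : ∀ k, (∀ x, S k x - k * vstar x ≤ su) ∧ (∀ x, (k:ℝ) * vstar x - S k x ≤ sl) := by
    intro k
    induction k with
    | zero =>
      constructor <;> intro x <;> simp [hSdef] <;> assumption
    | succ k ih =>
      obtain ⟨ihu, ihl⟩ := ih
      constructor
      · intro x
        have h1 : Vk k x ≤ Finset.univ.sup' Finset.univ_nonempty (Ψ k x) := hVub k x
        have h2 : Finset.univ.sup' Finset.univ_nonempty (Ψ k x)
            ≤ (k:ℝ) * vstar x - S k x + Vmax + γ * su := by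
          refine Finset.sup'_le _ _ fun a _ => ?_
          rw [hid k x a]
          have e1 : Qstar x a ≤ vstar x := Finset.le_sup' _ (Finset.mem_univ a)
          have e2 : Ψ 0 x a ≤ Vmax := (abs_le.1 (hΨ0b x a)).2
          have e3 : ∑ x', P x a x' * (S k x' - ↑k * vstar x') ≤ su :=
            wavg_le (hP0 x a) (hP1 x a) ihu
          have e4 : (k:ℝ) * Qstar x a ≤ (k:ℝ) * vstar x :=
            mul_le_mul_of_nonneg_left e1 (Nat.cast_nonneg k)
          have e5 : γ * (∑ x', P x a x' * (S k x' - ↑k * vstar x')) ≤ γ * su :=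
            mul_le_mul_of_nonneg_left e3 hγ0
          linarith
        have h3 : S (k+1) x = S k x + Vk k x := by
          rw [hSdef]; exact Finset.sum_range_succ _ _
        have h4 : -Vmax ≤ vstar x := (abs_le.1 (hvb x)).1
        rw [h3]
        push_cast
        linarith [hsu_eq]
      · intro x
        obtain ⟨a0, -, ha0⟩ := Finset.exists_mem_eq_sup' Finset.univ_nonempty (Qstar x)
        have h1 : Finset.univ.sup' Finset.univ_nonempty (Ψ k x) - c ≤ Vk k x := hVlb k x
        have h1b : Ψ k x a0 ≤ Finset.univ.sup' Finset.univ_nonempty (Ψ k x) :=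
          Finset.le_sup' _ (Finset.mem_univ a0)
        have h2 : (k:ℝ) * vstar x - S k x - Vmax - γ * sl ≤ Ψ k x a0 := by
          rw [hid k x a0]
          have e1 : vstar x = Qstar x a0 := ha0
          have e2 : -Vmax ≤ Ψ 0 x a0 := (abs_le.1 (hΨ0b x a0)).1
          have e3 : -sl ≤ ∑ x', P x a0 x' * (S k x' - ↑k * vstar x') :=
            le_wavg (hP0 x a0) (hP1 x a0) (fun x' => by linarith [ihl x'])
          have e5 : γ * (-sl) ≤ γ * (∑ x', P x a0 x' * (S k x' - ↑k * vstar x')) :=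
            mul_le_mul_of_nonneg_left e3 hγ0
          have e4 : (k:ℝ) * vstar x = (k:ℝ) * Qstar x a0 := by rw [e1]
          linarith
        have h3 : S (k+1) x = S k x + Vk k x := by
          rw [hSdef]; exact Finset.sum_range_succ _ _
        have h4 : vstar x ≤ Vmax := (abs_le.1 (hvb x)).2
        rw [h3]
        push_cast
        linarith [hsl_eq]
  -- the N bound : k * (vstar - pol_k Qstar) ≤ N
  set N : ℝ := c + 2 * Vmax + γ * (su + sl) with hNdef
  have hN0 : 0 ≤ N := by positivity
  have hNb : ∀ (k : ℕ) (x : X), (k:ℝ) * (vstar x - ∑ a, pol k x a * Qstar x a) ≤ N := by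
    intro k x
    obtain ⟨a0, -, ha0⟩ := Finset.exists_mem_eq_sup' Finset.univ_nonempty (Qstar x)
    obtain ⟨hAu, hAl⟩ := hA k
    have h1 : (k:ℝ) * vstar x ≤ Vk k x + c + Vmax + γ * sl + S k x := by
      have hida := hid k x a0
      have e1 : vstar x = Qstar x a0 := ha0
      have e2 : -Vmax ≤ Ψ 0 x a0 := (abs_le.1 (hΨ0b x a0)).1
      have e3 : -sl ≤ ∑ x', P x a0 x' * (S k x' - ↑k * vstar x') :=
        le_wavg (hP0 x a0) (hP1 x a0) (fun x' => by linarith [hAl x'])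
      have e5 : γ * (-sl) ≤ γ * (∑ x', P x a0 x' * (S k x' - ↑k * vstar x')) :=
        mul_le_mul_of_nonneg_left e3 hγ0
      have hup : Ψ k x a0 ≤ Vk k x + c := by
        have := hVlb k x
        have h1b : Ψ k x a0 ≤ Finset.univ.sup' Finset.univ_nonempty (Ψ k x) :=
          Finset.le_sup' _ (Finset.mem_univ a0)
        linarith
      have e4 : (k:ℝ) * vstar x = (k:ℝ) * Qstar x a0 := by rw [e1]
      linarith
    have h2 : Vk k x + S k x - Vmax - γ * su ≤ (k:ℝ) * ∑ a, pol k x a * Qstar x a := by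
      have hpt : ∀ a, Ψ k x a + (S k x - Vmax - γ * su) ≤ (k:ℝ) * Qstar x a := by
        intro a
        have hida := hid k x a
        have e2 : Ψ 0 x a ≤ Vmax := (abs_le.1 (hΨ0b x a)).2
        have e3 : ∑ x', P x a x' * (S k x' - ↑k * vstar x') ≤ su :=
          wavg_le (hP0 x a) (hP1 x a) hAu
        have e5 : γ * (∑ x', P x a x' * (S k x' - ↑k * vstar x')) ≤ γ * su :=
          mul_le_mul_of_nonneg_left e3 hγ0
        linarith
      have hmul : (k:ℝ) * ∑ a, pol k x a * Qstar x a
          = ∑ a, pol k x a * ((k:ℝ) * Qstar x a) := by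
        rw [Finset.mul_sum]
        exact Finset.sum_congr rfl fun a _ => by ring
      rw [hmul]
      have hmono := wavg_mono (w := pol k x)
        (f := fun a => Ψ k x a + (S k x - Vmax - γ * su))
        (g := fun a => (k:ℝ) * Qstar x a) (hpol0 k x) hpt
      have hsplit : ∑ a, pol k x a * (Ψ k x a + (S k x - Vmax - γ * su))
          = Vk k x + (S k x - Vmax - γ * su) := by
        rw [hVkdef]
        simp only [mul_add]
        rw [Finset.sum_add_distrib, ← Finset.sum_mul, hpol1 k x, one_mul]
      rw [hsplit] at hmono
      linarith
    nlinarith [h1, h2]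
  -- trivial bounds
  have hDz : ∀ (k : ℕ) (x : X), 0 ≤ vstar x - ∑ a, pol k x a * Qstar x a := by
    intro k x
    have := wavg_le (w := pol k x) (f := Qstar x) (b := vstar x) (hpol0 k x) (hpol1 k x)
      (fun a => Finset.le_sup' (Qstar x) (Finset.mem_univ a))
    linarith
  have hD0 : ∀ (k : ℕ) (x : X), vstar x - ∑ a, pol k x a * Qstar x a ≤ 2 * Vmax := by
    intro k x
    have h1 := le_wavg (w := pol k x) (f := Qstar x) (hpol0 k x) (hpol1 k x)
      (fun a => (abs_le.1 (hQsb x a)).1)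
    have h2 : vstar x ≤ Vmax := (abs_le.1 (hvb x)).2
    linarith
  -- the contraction argument
  have hfin : ∀ (k : ℕ) (D : ℝ), (∀ x, vstar x - ∑ a, pol k x a * Qstar x a ≤ D) →
      supNorm (fun x a => Qstar x a - Qpi k x a) ≤ γ * D / (1 - γ) := by
    intro k D hD
    set s := supNorm (fun x a => Qstar x a - Qpi k x a) with hsdef
    have hstep : s ≤ γ * D + γ * s := by
      refine supNorm_le fun x a => ?_
      have h1 : Qstar x a = r x a + γ * ∑ x', P x a x' * vstar x' := by
        conv_lhs => rw [← hQstar]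
        rfl
      have h2 : Qpi k x a = r x a
          + γ * ∑ x', P x a x' * (∑ a', pol k x' a' * Qpi k x' a') := by
        conv_lhs => rw [← hQpi k]
        unfold bellman
        congr 1
        congr 1
        refine Finset.sum_congr rfl fun x' _ => ?_
        rw [Finset.mul_sum]
        exact Finset.sum_congr rfl fun a' _ => by ring
      have hdiff : Qstar x a - Qpi k x a
          = γ * (∑ x', P x a x' * (vstar x' - ∑ a', pol k x' a' * Qstar x' a'))
            + γ * (∑ x', P x a x' * (∑ a', pol k x' a' * (Qstar x' a' - Qpi k x' a'))) := by
        rw [h1, h2]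
        have hinner : ∀ x', (vstar x' - ∑ a', pol k x' a' * Qstar x' a')
              + (∑ a', pol k x' a' * (Qstar x' a' - Qpi k x' a'))
            = vstar x' - ∑ a', pol k x' a' * Qpi k x' a' := by
          intro x'
          have : ∑ a', pol k x' a' * (Qstar x' a' - Qpi k x' a')
              = (∑ a', pol k x' a' * Qstar x' a') - ∑ a', pol k x' a' * Qpi k x' a' := by
            rw [← Finset.sum_sub_distrib]
            exact Finset.sum_congr rfl fun a' _ => by ring
          rw [this]; ring
        have houter : (∑ x', P x a x' * (vstar x' - ∑ a', pol k x' a' * Qstar x' a'))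
              + (∑ x', P x a x' * (∑ a', pol k x' a' * (Qstar x' a' - Qpi k x' a')))
            = ∑ x', P x a x' * (vstar x' - ∑ a', pol k x' a' * Qpi k x' a') := by
          rw [← Finset.sum_add_distrib]
          refine Finset.sum_congr rfl fun x' _ => ?_
          rw [← mul_add, hinner x']
        have hsplit2 : ∑ x', P x a x' * (vstar x' - ∑ a', pol k x' a' * Qpi k x' a')
            = (∑ x', P x a x' * vstar x')
              - ∑ x', P x a x' * (∑ a', pol k x' a' * Qpi k x' a') := by
          rw [← Finset.sum_sub_distrib]
          exact Finset.sum_congr rfl fun x' _ => by ring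
        linear_combination (-γ) * houter - γ * hsplit2
      rw [hdiff]
      have hb1 : |∑ x', P x a x' * (vstar x' - ∑ a', pol k x' a' * Qstar x' a')| ≤ D := by
        refine abs_wavg_le (hP0 x a) (hP1 x a) fun x' => ?_
        rw [abs_le]
        constructor
        · linarith [hDz k x', hD x']
        · exact hD x'
      have hb2 : |∑ x', P x a x' * (∑ a', pol k x' a' * (Qstar x' a' - Qpi k x' a'))| ≤ s := by
        refine abs_wavg_le (hP0 x a) (hP1 x a) fun x' => ?_
        refine abs_wavg_le (hpol0 k x') (hpol1 k x') fun a' => ?_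
        exact abs_le_supNorm (fun x a => Qstar x a - Qpi k x a) x' a'
      calc |γ * (∑ x', P x a x' * (vstar x' - ∑ a', pol k x' a' * Qstar x' a'))
            + γ * (∑ x', P x a x' * (∑ a', pol k x' a' * (Qstar x' a' - Qpi k x' a')))|
          ≤ |γ * (∑ x', P x a x' * (vstar x' - ∑ a', pol k x' a' * Qstar x' a'))|
            + |γ * (∑ x', P x a x' * (∑ a', pol k x' a' * (Qstar x' a' - Qpi k x' a')))| :=
            abs_add_le _ _
        _ ≤ γ * D + γ * s := by
            rw [abs_mul, abs_mul, abs_of_nonneg hγ0]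
            exact add_le_add (mul_le_mul_of_nonneg_left hb1 hγ0)
              (mul_le_mul_of_nonneg_left hb2 hγ0)
    rw [le_div_iff₀ hγ']
    nlinarith [hstep]
  -- final assembly
  intro k
  have hM0 : 0 ≤ 4 * Vmax + c := by linarith
  have hNle : N * (1 - γ) ≤ 4 * Vmax + c := by
    have h3 : γ * ((1 - γ) * su) = γ * (2 * Vmax) := by rw [hsu_eq]
    have h4 : γ * ((1 - γ) * sl) = γ * (2 * Vmax + c) := by rw [hsl_eq]
    have h5 : γ * c ≤ c := by nlinarith
    have h6 : γ * Vmax ≤ Vmax := by nlinarith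
    nlinarith [h3, h4]
  clear_value Vk S vstar su sl N c
  rcases Nat.eq_zero_or_pos k with hk | hk
  · subst hk
    refine le_trans (hfin 0 (2 * Vmax) (hD0 0)) ?_
    have hsq : (0:ℝ) < (1 - γ) ^ 2 := pow_pos hγ' 2
    have hint : 0 ≤ γ * (1 - γ) * (3 * Vmax + γ * Vmax + c) := by
      refine mul_nonneg (mul_nonneg hγ0 hγ'.le) ?_
      linarith [mul_nonneg hγ0 hVpos.le]
    simp only [Nat.cast_zero, zero_add, mul_one]
    rw [div_le_div_iff₀ hγ' hsq]
    nlinarith [hint]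
  · have hkpos : (0:ℝ) < (k:ℝ) := by exact_mod_cast hk
    have hDk : ∀ x, vstar x - ∑ a, pol k x a * Qstar x a ≤ N / k := by
      intro x
      rw [le_div_iff₀ hkpos]
      calc (vstar x - ∑ a, pol k x a * Qstar x a) * k
          = (k:ℝ) * (vstar x - ∑ a, pol k x a * Qstar x a) := by ring
        _ ≤ N := hNb k x
    refine le_trans (hfin k (N / k) hDk) ?_
    have hden : (0:ℝ) < (1 - γ) ^ 2 * ((k:ℝ) + 1) :=
      mul_pos (pow_pos hγ' 2) (by positivity)
    rw [div_le_div_iff₀ hγ' hden]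
    -- γ * (N/k) * ((1-γ)^2 * (k+1)) ≤ 2*γ*(4Vmax+c) * (1-γ)
    have hk2 : ((k:ℝ) + 1) ≤ 2 * k := by
      have : (1:ℝ) ≤ (k:ℝ) := by exact_mod_cast hk
      linarith
    have hc1 : γ * (N / k) * ((1 - γ) ^ 2 * ((k:ℝ) + 1))
        ≤ γ * (N / k) * ((1 - γ) ^ 2 * (2 * k)) := by
      have hnn : 0 ≤ γ * (N / k) := mul_nonneg hγ0 (div_nonneg hN0 hkpos.le)
      refine mul_le_mul_of_nonneg_left ?_ hnn
      have h2 : (0:ℝ) ≤ (1 - γ) ^ 2 := by positivity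
      exact mul_le_mul_of_nonneg_left hk2 h2
    have hc2 : γ * (N / k) * ((1 - γ) ^ 2 * (2 * (k:ℝ)))
        = 2 * γ * (1 - γ) * (N * (1 - γ)) := by
      field_simp
    have hc3 : 2 * γ * (1 - γ) * (N * (1 - γ)) ≤ 2 * γ * (1 - γ) * (4 * Vmax + c) := by
      refine mul_le_mul_of_nonneg_left hNle ?_
      have : (0:ℝ) ≤ 2 * γ := by linarith
      exact mul_nonneg this hγ'.le
    calc γ * (N / k) * ((1 - γ) ^ 2 * ((k:ℝ) + 1))
        ≤ γ * (N / k) * ((1 - γ) ^ 2 * (2 * k)) := hc1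
      _ = 2 * γ * (1 - γ) * (N * (1 - γ)) := hc2
      _ ≤ 2 * γ * (1 - γ) * (4 * Vmax + c) := hc3
      _ = 2 * γ * (4 * Vmax + c) * (1 - γ) := by ring
end

section
/- Consider the exact DPP iteration with parameter η > 0 started from an action preference function Ψ_0 with ‖Ψ_0‖ ≤ V_max, and let π_k be the policy induced by DPP at round k. Then for every state-action pair (x,a), lim_{k→∞} Q^{π_k}(x,a) = Q*(x,a). -/
open Finset Real Filter

variable {X A : Type*}

section DPPAux
open Finset Real Filter
variable {A : Type*} [Fintype A] [Nonempty A]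

lemma DPP.expsum_pos (β : ℝ) (f : A → ℝ) : 0 < ∑ a, Real.exp (β * f a) :=
  Finset.sum_pos (fun _ _ => Real.exp_pos _) Finset.univ_nonempty

lemma DPP.softmax_nonneg (β : ℝ) (f : A → ℝ) (a : A) :
    0 ≤ Real.exp (β * f a) / ∑ a', Real.exp (β * f a') :=
  div_nonneg (Real.exp_nonneg _) (DPP.expsum_pos β f).le

lemma DPP.softmax_sum_one (β : ℝ) (f : A → ℝ) :
    ∑ a, Real.exp (β * f a) / (∑ a', Real.exp (β * f a')) = 1 := by
  rw [← Finset.sum_div, div_self (DPP.expsum_pos β f).ne']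

lemma DPP.weighted_le_sup' (w g : A → ℝ) (hw : ∀ a, 0 ≤ w a) (h1 : ∑ a, w a = 1) :
    ∑ a, w a * g a ≤ Finset.univ.sup' Finset.univ_nonempty g := by
  calc ∑ a, w a * g a ≤ ∑ a, w a * Finset.univ.sup' Finset.univ_nonempty g := by
        refine Finset.sum_le_sum fun a _ => ?_
        exact mul_le_mul_of_nonneg_left (Finset.le_sup' g (Finset.mem_univ a)) (hw a)
    _ = Finset.univ.sup' Finset.univ_nonempty g := by rw [← Finset.sum_mul, h1, one_mul]

omit [Nonempty A] in
lemma DPP.abs_weighted_le (w g : A → ℝ) (hw : ∀ a, 0 ≤ w a) (h1 : ∑ a, w a = 1)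
    (M : ℝ) (hg : ∀ a, |g a| ≤ M) : |∑ a, w a * g a| ≤ M := by
  calc |∑ a, w a * g a| ≤ ∑ a, |w a * g a| := Finset.abs_sum_le_sum_abs _ _
    _ ≤ ∑ a, w a * M := by
        refine Finset.sum_le_sum fun a _ => ?_
        rw [abs_mul, abs_of_nonneg (hw a)]
        exact mul_le_mul_of_nonneg_left (hg a) (hw a)
    _ = M := by rw [← Finset.sum_mul, h1, one_mul]

lemma DPP.softmax_gap (β : ℝ) (hβ : 0 < β) (f : A → ℝ) :
    Finset.univ.sup' Finset.univ_nonempty f - (Fintype.card A : ℝ) / β ≤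
      ∑ a, (Real.exp (β * f a) / ∑ a', Real.exp (β * f a')) * f a := by
  set m := Finset.univ.sup' Finset.univ_nonempty f with hm
  set Z := ∑ a', Real.exp (β * f a') with hZ
  have hZpos : 0 < Z := DPP.expsum_pos β f
  obtain ⟨a0, -, ha0⟩ := Finset.exists_mem_eq_sup' (Finset.univ_nonempty (α := A)) f
  have hZge : Real.exp (β * m) ≤ Z := by
    rw [hm, ha0]
    exact Finset.single_le_sum (f := fun a => Real.exp (β * f a))
      (fun a _ => (Real.exp_pos _).le) (Finset.mem_univ a0)
  have hsum1 : ∑ a, Real.exp (β * f a) / Z = 1 := DPP.softmax_sum_one β f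
  have key : m - ∑ a, (Real.exp (β * f a) / Z) * f a
      = ∑ a, (Real.exp (β * f a) / Z) * (m - f a) := by
    simp only [mul_sub, Finset.sum_sub_distrib, ← Finset.sum_mul, hsum1, one_mul]
  have hterm : ∀ a : A, (Real.exp (β * f a) / Z) * (m - f a) ≤ 1 / β := by
    intro a
    have htnn : 0 ≤ m - f a := sub_nonneg.2 (Finset.le_sup' f (Finset.mem_univ a))
    have hw : Real.exp (β * f a) / Z ≤ Real.exp (-(β * (m - f a))) := by
      rw [div_le_iff₀ hZpos]
      calc Real.exp (β * f a) = Real.exp (-(β * (m - f a))) * Real.exp (β * m) := by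
            rw [← Real.exp_add]; ring_nf
        _ ≤ Real.exp (-(β * (m - f a))) * Z :=
            mul_le_mul_of_nonneg_left hZge (Real.exp_nonneg _)
    calc (Real.exp (β * f a) / Z) * (m - f a)
        ≤ Real.exp (-(β * (m - f a))) * (m - f a) := mul_le_mul_of_nonneg_right hw htnn
      _ ≤ Real.exp (-(β * (m - f a))) * (Real.exp (β * (m - f a)) / β) := by
          refine mul_le_mul_of_nonneg_left ?_ (Real.exp_nonneg _)
          rw [le_div_iff₀ hβ, mul_comm]
          calc β * (m - f a) ≤ β * (m - f a) + 1 := le_add_of_nonneg_right one_pos.le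
            _ ≤ Real.exp (β * (m - f a)) := Real.add_one_le_exp _
      _ = 1 / β := by
          rw [mul_div_assoc', ← Real.exp_add, neg_add_cancel, Real.exp_zero]
  have hsum : ∑ a, (Real.exp (β * f a) / Z) * (m - f a) ≤ (Fintype.card A : ℝ) / β := by
    calc ∑ a, (Real.exp (β * f a) / Z) * (m - f a) ≤ ∑ _a : A, 1 / β :=
          Finset.sum_le_sum fun a _ => hterm a
      _ = (Fintype.card A : ℝ) / β := by
          rw [Finset.sum_const, Finset.card_univ, nsmul_eq_mul]; ring
  linarith [key, hsum]

omit [Fintype A] [Nonempty A] in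
lemma DPP.softmax_shift (h : A → ℝ) (c : ℝ) (a : A) (s : Finset A) :
    Real.exp (h a + c) / ∑ a' ∈ s, Real.exp (h a' + c)
      = Real.exp (h a) / ∑ a' ∈ s, Real.exp (h a') := by
  simp only [Real.exp_add, ← Finset.sum_mul]
  rw [mul_div_mul_right _ _ (Real.exp_ne_zero c)]

lemma DPP.sup'_sub_le {ι : Type*} [Fintype ι] [Nonempty ι] (f g : ι → ℝ) (c : ℝ)
    (h : ∀ i, |f i - g i| ≤ c) :
    |Finset.univ.sup' Finset.univ_nonempty f - Finset.univ.sup' Finset.univ_nonempty g| ≤ c := by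
  rw [abs_sub_le_iff]
  constructor
  · rw [sub_le_iff_le_add]
    refine Finset.sup'_le _ _ fun i _ => ?_
    have := (abs_sub_le_iff.1 (h i)).1
    have hg : g i ≤ Finset.univ.sup' Finset.univ_nonempty g := Finset.le_sup' g (Finset.mem_univ i)
    linarith
  · rw [sub_le_iff_le_add]
    refine Finset.sup'_le _ _ fun i _ => ?_
    have := (abs_sub_le_iff.1 (h i)).2
    have hf : f i ≤ Finset.univ.sup' Finset.univ_nonempty f := Finset.le_sup' f (Finset.mem_univ i)
    linarith

end DPPAux

lemma DPP.qpi_err {X A : Type*} [Fintype X] [Fintype A] [Nonempty X] [Nonempty A]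
    (P : X → A → X → ℝ) (hP0 : ∀ x a x', 0 ≤ P x a x') (hP1 : ∀ x a, ∑ x', P x a x' = 1)
    (r : X → A → ℝ) (γ : ℝ) (hγ0 : 0 ≤ γ) (hγ1 : γ < 1)
    (Qstar : X → A → ℝ) (hQstar : bellmanOpt P r γ Qstar = Qstar)
    (p : X → A → ℝ) (hp0 : ∀ x a, 0 ≤ p x a) (hp1 : ∀ x, ∑ a, p x a = 1)
    (Q : X → A → ℝ) (hQ : bellman P r γ p Q = Q)
    (δ : ℝ) (hδ0 : 0 ≤ δ)
    (hδ : ∀ x, Finset.univ.sup' Finset.univ_nonempty (Qstar x) - ∑ a, p x a * Qstar x a ≤ δ) :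
    ∀ x a, |Q x a - Qstar x a| ≤ γ * δ / (1 - γ) := by
  have h1γ : 0 < 1 - γ := by linarith
  set N : ℝ := Finset.univ.sup' Finset.univ_nonempty
    (fun q : X × A => |Q q.1 q.2 - Qstar q.1 q.2|) with hN
  have hNmem : ∀ x a, |Q x a - Qstar x a| ≤ N := fun x a =>
    Finset.le_sup' (fun q : X × A => |Q q.1 q.2 - Qstar q.1 q.2|) (Finset.mem_univ (x, a))
  have hNnn : 0 ≤ N := le_trans (abs_nonneg _) (hNmem Classical.ofNonempty Classical.ofNonempty)
  have key : ∀ x a, |Q x a - Qstar x a| ≤ γ * (N + δ) := by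
    intro x a
    have hQd : Q x a - Qstar x a
        = γ * ∑ x', P x a x' * ((∑ a', p x' a' * Q x' a')
            - Finset.univ.sup' Finset.univ_nonempty (Qstar x')) := by
      conv_lhs => rw [← hQ, ← hQstar]
      simp only [bellman, bellmanOpt]
      have h2 : ∑ x', ∑ a', P x a x' * p x' a' * Q x' a'
          = ∑ x', P x a x' * ∑ a', p x' a' * Q x' a' := by
        refine Finset.sum_congr rfl fun x' _ => ?_
        rw [Finset.mul_sum]
        exact Finset.sum_congr rfl fun a' _ => by ring
      have h3 : ∑ x', P x a x' * ((∑ a', p x' a' * Q x' a')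
            - Finset.univ.sup' Finset.univ_nonempty (Qstar x'))
          = (∑ x', P x a x' * ∑ a', p x' a' * Q x' a')
            - ∑ x', P x a x' * Finset.univ.sup' Finset.univ_nonempty (Qstar x') := by
        simp only [mul_sub, Finset.sum_sub_distrib]
      rw [h2, h3]
      ring
    have hinner : ∀ x', |(∑ a', p x' a' * Q x' a')
        - Finset.univ.sup' Finset.univ_nonempty (Qstar x')| ≤ N + δ := by
      intro x'
      have h1 : |∑ a', p x' a' * (Q x' a' - Qstar x' a')| ≤ N :=
        DPP.abs_weighted_le _ _ (hp0 x') (hp1 x') N (fun a' => hNmem x' a')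
      have h2 : 0 ≤ Finset.univ.sup' Finset.univ_nonempty (Qstar x') - ∑ a', p x' a' * Qstar x' a' :=
        sub_nonneg.2 (DPP.weighted_le_sup' _ _ (hp0 x') (hp1 x'))
      have h3 := hδ x'
      have hsplit : (∑ a', p x' a' * Q x' a') - Finset.univ.sup' Finset.univ_nonempty (Qstar x')
          = (∑ a', p x' a' * (Q x' a' - Qstar x' a'))
            - (Finset.univ.sup' Finset.univ_nonempty (Qstar x') - ∑ a', p x' a' * Qstar x' a') := by
        simp only [mul_sub, Finset.sum_sub_distrib]; ring
      rw [hsplit]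
      have := abs_le.1 h1
      rw [abs_le]
      constructor <;> linarith
    rw [hQd, abs_mul, abs_of_nonneg hγ0]
    refine mul_le_mul_of_nonneg_left ?_ hγ0
    calc |∑ x', P x a x' * ((∑ a', p x' a' * Q x' a')
            - Finset.univ.sup' Finset.univ_nonempty (Qstar x'))|
        ≤ ∑ x', |P x a x' * ((∑ a', p x' a' * Q x' a')
            - Finset.univ.sup' Finset.univ_nonempty (Qstar x'))| := Finset.abs_sum_le_sum_abs _ _
      _ ≤ ∑ x', P x a x' * (N + δ) := by
          refine Finset.sum_le_sum fun x' _ => ?_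
          rw [abs_mul, abs_of_nonneg (hP0 x a x')]
          exact mul_le_mul_of_nonneg_left (hinner x') (hP0 x a x')
      _ = N + δ := by rw [← Finset.sum_mul, hP1, one_mul]
  have hNle : N ≤ γ * (N + δ) := Finset.sup'_le _ _ fun q _ => key q.1 q.2
  have hNfin : N ≤ γ * δ / (1 - γ) := by
    rw [le_div_iff₀ h1γ]; nlinarith
  intro x a
  exact le_trans (hNmem x a) hNfin

/-- Corollary 1 of the paper: the policy induced by exact DPP asymptotically converges
to the optimal policy, i.e. `Q^{π_k} → Q*` pointwise. -/
theorem dpp_asymptotic_convergence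
    {X A : Type*} [Fintype X] [Fintype A] [Nonempty X] [Nonempty A]
    (P : X → A → X → ℝ) (hP0 : ∀ x a x', 0 ≤ P x a x') (hP1 : ∀ x a, ∑ x', P x a x' = 1)
    (r : X → A → ℝ) (Rmax : ℝ) (hR : 0 < Rmax) (hr : ∀ x a, |r x a| ≤ Rmax)
    (γ : ℝ) (hγ0 : 0 ≤ γ) (hγ1 : γ < 1)
    (Vmax : ℝ) (hV : Vmax = Rmax / (1 - γ))
    (η : ℝ) (hη : 0 < η)
    (Ψ : ℕ → X → A → ℝ) (hΨ0 : supNorm (Ψ 0) ≤ Vmax)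
    (pol : ℕ → X → A → ℝ) (hpol : ∀ k, pol k = softmaxPol η (Ψ k))
    (hΨ : ∀ k x a, Ψ (k + 1) x a =
      Ψ k x a + bellman P r γ (pol k) (Ψ k) x a - polApply (pol k) (Ψ k) x)
    (Qstar : X → A → ℝ) (hQstar : bellmanOpt P r γ Qstar = Qstar)
    (Qpi : ℕ → X → A → ℝ) (hQpi : ∀ k, bellman P r γ (pol k) (Qpi k) = Qpi k) :
    ∀ x a, Filter.Tendsto (fun k => Qpi k x a) Filter.atTop (nhds (Qstar x a)) := by
  classical
  have h1γ : 0 < 1 - γ := by linarith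
  have hVpos : 0 < Vmax := by rw [hV]; positivity
  set Lc : ℝ := (Fintype.card A : ℝ) with hLc
  have hLnn : (0:ℝ) ≤ Lc := Nat.cast_nonneg _
  have hk1 : ∀ k : ℕ, (0:ℝ) < (k:ℝ) + 1 := fun k => by positivity
  set Vst : X → ℝ := fun x => Finset.univ.sup' Finset.univ_nonempty (Qstar x) with hVstdef
  have hQfix : ∀ x a, Qstar x a = r x a + γ * ∑ x', P x a x' * Vst x' := by
    intro x a
    conv_lhs => rw [← hQstar]
    rfl
  -- Q* is bounded by Vmax
  have hQsb : ∀ x a, |Qstar x a| ≤ Vmax := by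
    set NQ : ℝ := Finset.univ.sup' Finset.univ_nonempty
      (fun q : X × A => |Qstar q.1 q.2|) with hNQ
    have hNQmem : ∀ x a, |Qstar x a| ≤ NQ := fun x a =>
      Finset.le_sup' (fun q : X × A => |Qstar q.1 q.2|) (Finset.mem_univ (x, a))
    have hVstNQ : ∀ x, |Vst x| ≤ NQ := by
      intro x
      obtain ⟨a0, -, ha0⟩ := Finset.exists_mem_eq_sup' (Finset.univ_nonempty (α := A)) (Qstar x)
      rw [hVstdef]
      simp only
      rw [ha0]
      exact hNQmem x a0
    have hNQle : NQ ≤ Rmax + γ * NQ := by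
      refine Finset.sup'_le _ _ fun q _ => ?_
      rw [hQfix q.1 q.2]
      have h1 : |∑ x', P q.1 q.2 x' * Vst x'| ≤ NQ :=
        DPP.abs_weighted_le (P q.1 q.2) Vst (hP0 q.1 q.2) (hP1 q.1 q.2) NQ hVstNQ
      calc |r q.1 q.2 + γ * ∑ x', P q.1 q.2 x' * Vst x'|
          ≤ |r q.1 q.2| + |γ * ∑ x', P q.1 q.2 x' * Vst x'| := abs_add_le _ _
        _ ≤ Rmax + γ * NQ := by
            rw [abs_mul, abs_of_nonneg hγ0]
            exact add_le_add (hr q.1 q.2) (mul_le_mul_of_nonneg_left h1 hγ0)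
    intro x a
    refine le_trans (hNQmem x a) ?_
    rw [hV, le_div_iff₀ h1γ]
    nlinarith
  have hVstb : ∀ x, |Vst x| ≤ Vmax := by
    intro x
    obtain ⟨a0, -, ha0⟩ := Finset.exists_mem_eq_sup' (Finset.univ_nonempty (α := A)) (Qstar x)
    rw [hVstdef]; simp only; rw [ha0]; exact hQsb x a0
  -- policies are stochastic
  have hpol0 : ∀ k x a, 0 ≤ pol k x a := by
    intro k x a; rw [hpol k]; exact DPP.softmax_nonneg η (Ψ k x) a
  have hpol1 : ∀ k x, ∑ a, pol k x a = 1 := by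
    intro k x; rw [hpol k]; exact DPP.softmax_sum_one η (Ψ k x)
  -- value and cumulative value
  set Vk : ℕ → X → ℝ := fun k x => ∑ a, pol k x a * Ψ k x a with hVkdef
  set sc : ℕ → X → ℝ := fun k x => ∑ j ∈ Finset.range (k+1), Vk j x with hscdef
  have hΨrec : ∀ k x a, Ψ (k+1) x a
      = Ψ k x a + r x a + γ * (∑ x', P x a x' * Vk k x') - Vk k x := by
    intro k x a
    rw [hΨ k x a]
    simp only [bellman, polApply]
    have h2 : ∑ x', ∑ a', P x a x' * pol k x' a' * Ψ k x' a'
        = ∑ x', P x a x' * Vk k x' := by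
      refine Finset.sum_congr rfl fun x' _ => ?_
      simp only [hVkdef]
      rw [Finset.mul_sum]
      exact Finset.sum_congr rfl fun a' _ => by ring
    rw [h2]
    simp only [hVkdef]
    ring
  have hPsiF : ∀ k x a, Ψ (k+1) x a
      = Ψ 0 x a + ((k:ℝ)+1) * r x a + γ * (∑ x', P x a x' * sc k x') - sc k x := by
    intro k
    induction k with
    | zero =>
      intro x a
      have hs0 : sc 0 = Vk 0 := by
        funext y; simp [hscdef, Finset.sum_range_one]
      rw [hΨrec 0 x a, hs0]
      push_cast; ring
    | succ n ih =>
      intro x a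
      have hsS : ∀ y, sc (n+1) y = sc n y + Vk (n+1) y := by
        intro y; simp [hscdef, Finset.sum_range_succ]
      rw [hΨrec (n+1) x a, ih x a]
      have hsum : ∑ x', P x a x' * sc (n+1) x'
          = (∑ x', P x a x' * sc n x') + ∑ x', P x a x' * Vk (n+1) x' := by
        rw [← Finset.sum_add_distrib]
        refine Finset.sum_congr rfl fun x' _ => ?_
        rw [hsS]; ring
      rw [hsum, hsS x]
      push_cast; ring
  -- averaged action values
  set Qb : ℕ → X → A → ℝ := fun k x a =>
    (Ψ 0 x a + ((k:ℝ)+1) * r x a + γ * ∑ x', P x a x' * sc k x') / ((k:ℝ)+1) with hQbdef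
  have hQbmul : ∀ (k : ℕ) (x : X) (a : A), ((k:ℝ)+1) * Qb k x a
      = Ψ 0 x a + ((k:ℝ)+1) * r x a + γ * ∑ x', P x a x' * sc k x' := by
    intro k x a
    simp only [hQbdef]
    rw [mul_comm, div_mul_cancel₀ _ (hk1 k).ne']
  have hΨQb : ∀ k x a, Ψ (k+1) x a = ((k:ℝ)+1) * Qb k x a - sc k x := by
    intro k x a
    rw [hPsiF k x a, hQbmul k x a]
  -- the policy at stage k+1 is the softmax of (k+1)·Qb k
  have hpolQ : ∀ k x a, pol (k+1) x a
      = Real.exp ((η*((k:ℝ)+1)) * Qb k x a)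
        / ∑ a', Real.exp ((η*((k:ℝ)+1)) * Qb k x a') := by
    intro k x a
    rw [hpol (k+1)]
    simp only [softmaxPol]
    have hexp : ∀ b, η * Ψ (k+1) x b
        = (fun b => (η*((k:ℝ)+1)) * Qb k x b) b + (-(η * sc k x)) := by
      intro b; simp only; rw [hΨQb k x b]; ring
    simp only [hexp]
    exact DPP.softmax_shift (fun b => (η*((k:ℝ)+1)) * Qb k x b) (-(η * sc k x)) a Finset.univ
  -- deviation of cumulative values
  set w : ℕ → ℝ := fun k => Finset.univ.sup' Finset.univ_nonempty
    (fun x => |sc k x - ((k:ℝ)+1) * Vst x|) with hwdef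
  have hwmem : ∀ k x, |sc k x - ((k:ℝ)+1) * Vst x| ≤ w k := fun k x =>
    Finset.le_sup' (fun x => |sc k x - ((k:ℝ)+1) * Vst x|) (Finset.mem_univ x)
  have hwnn : ∀ k, 0 ≤ w k := fun k =>
    le_trans (abs_nonneg _) (hwmem k Classical.ofNonempty)
  have hΨ0b : ∀ x a, |Ψ 0 x a| ≤ Vmax := by
    intro x a
    simp only [supNorm] at hΨ0
    exact le_trans (Finset.le_sup' (fun p : X × A => |Ψ 0 p.1 p.2|) (Finset.mem_univ (x,a))) hΨ0
  -- Qb is close to Q*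
  have hQbQ : ∀ k x a, |Qb k x a - Qstar x a| ≤ (Vmax + γ * w k) / ((k:ℝ)+1) := by
    intro k x a
    have hnum : ((k:ℝ)+1) * (Qb k x a - Qstar x a)
        = Ψ 0 x a + γ * ∑ x', P x a x' * (sc k x' - ((k:ℝ)+1) * Vst x') := by
      rw [mul_sub, hQbmul k x a, hQfix x a]
      have h4 : ∑ x', P x a x' * (sc k x' - ((k:ℝ)+1) * Vst x')
          = (∑ x', P x a x' * sc k x') - ((k:ℝ)+1) * ∑ x', P x a x' * Vst x' := by
        simp only [mul_sub, Finset.sum_sub_distrib, Finset.mul_sum]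
        congr 1
        exact Finset.sum_congr rfl fun x' _ => by ring
      rw [h4]; ring
    have h1 : |∑ x', P x a x' * (sc k x' - ((k:ℝ)+1) * Vst x')| ≤ w k :=
      DPP.abs_weighted_le (P x a) _ (hP0 x a) (hP1 x a) (w k) (fun x' => hwmem k x')
    have habs : |((k:ℝ)+1) * (Qb k x a - Qstar x a)| ≤ Vmax + γ * w k := by
      rw [hnum]
      calc |Ψ 0 x a + γ * ∑ x', P x a x' * (sc k x' - ((k:ℝ)+1) * Vst x')|
          ≤ |Ψ 0 x a| + |γ * ∑ x', P x a x' * (sc k x' - ((k:ℝ)+1) * Vst x')| := abs_add_le _ _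
        _ ≤ Vmax + γ * w k := by
            rw [abs_mul, abs_of_nonneg hγ0]
            exact add_le_add (hΨ0b x a) (mul_le_mul_of_nonneg_left h1 hγ0)
    rw [abs_mul, abs_of_pos (hk1 k)] at habs
    exact (le_div_iff₀' (hk1 k)).2 habs
  -- hence the max of Qb is close to Vst
  have hmQ : ∀ k x, |Finset.univ.sup' Finset.univ_nonempty (Qb k x) - Vst x|
      ≤ (Vmax + γ * w k) / ((k:ℝ)+1) := by
    intro k x
    rw [hVstdef]
    exact DPP.sup'_sub_le (Qb k x) (Qstar x) _ (fun a => hQbQ k x a)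
  -- the cumulative value recursion
  have hsrec : ∀ k x, |sc (k+1) x
      - ((k:ℝ)+1) * Finset.univ.sup' Finset.univ_nonempty (Qb k x)| ≤ Lc / η := by
    intro k x
    have hβpos : 0 < η * ((k:ℝ)+1) := by positivity
    have hterm : ∀ a, pol (k+1) x a * Ψ (k+1) x a
        = ((k:ℝ)+1) * ((Real.exp ((η*((k:ℝ)+1)) * Qb k x a)
              / ∑ a', Real.exp ((η*((k:ℝ)+1)) * Qb k x a')) * Qb k x a)
          - (Real.exp ((η*((k:ℝ)+1)) * Qb k x a)
              / ∑ a', Real.exp ((η*((k:ℝ)+1)) * Qb k x a')) * sc k x := by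
      intro a
      rw [hpolQ k x a, hΨQb k x a]; ring
    have hVk1 : Vk (k+1) x
        = ((k:ℝ)+1) * (∑ a, (Real.exp ((η*((k:ℝ)+1)) * Qb k x a)
            / ∑ a', Real.exp ((η*((k:ℝ)+1)) * Qb k x a')) * Qb k x a) - sc k x := by
      simp only [hVkdef]
      rw [Finset.sum_congr rfl fun a _ => hterm a, Finset.sum_sub_distrib,
        ← Finset.mul_sum, ← Finset.sum_mul, DPP.softmax_sum_one (η*((k:ℝ)+1)) (Qb k x), one_mul]
    have hgap1 : Finset.univ.sup' Finset.univ_nonempty (Qb k x) - Lc / (η*((k:ℝ)+1))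
        ≤ ∑ a, (Real.exp ((η*((k:ℝ)+1)) * Qb k x a)
            / ∑ a', Real.exp ((η*((k:ℝ)+1)) * Qb k x a')) * Qb k x a :=
      DPP.softmax_gap (η*((k:ℝ)+1)) hβpos (Qb k x)
    have hgap2 : ∑ a, (Real.exp ((η*((k:ℝ)+1)) * Qb k x a)
            / ∑ a', Real.exp ((η*((k:ℝ)+1)) * Qb k x a')) * Qb k x a
        ≤ Finset.univ.sup' Finset.univ_nonempty (Qb k x) :=
      DPP.weighted_le_sup' _ _ (fun a => DPP.softmax_nonneg (η*((k:ℝ)+1)) (Qb k x) a)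
        (DPP.softmax_sum_one (η*((k:ℝ)+1)) (Qb k x))
    have hscS : sc (k+1) x = sc k x + Vk (k+1) x := by
      simp [hscdef, Finset.sum_range_succ]
    have hLeq : ((k:ℝ)+1) * (Lc / (η*((k:ℝ)+1))) = Lc / η := by
      field_simp
    rw [hscS, hVk1]
    rw [abs_le]
    constructor
    · have := mul_le_mul_of_nonneg_left hgap1 (hk1 k).le
      rw [mul_sub, hLeq] at this
      linarith
    · have := mul_le_mul_of_nonneg_left hgap2 (hk1 k).le
      have hLnn2 : 0 ≤ Lc / η := by positivity
      linarith
  -- the deviation recursion : w (k+1) ≤ γ w k + C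
  set Cc : ℝ := 2*Vmax + Lc/η with hCcdef
  have hCnn : 0 ≤ Cc := by positivity
  have hwrec : ∀ k, w (k+1) ≤ γ * w k + Cc := by
    intro k
    refine Finset.sup'_le _ _ fun x _ => ?_
    have h1 := hsrec k x
    have h2 := hmQ k x
    have h3 := hVstb x
    have t2 : |((k:ℝ)+1) * (Finset.univ.sup' Finset.univ_nonempty (Qb k x) - Vst x)|
        ≤ Vmax + γ * w k := by
      rw [abs_mul, abs_of_pos (hk1 k)]
      exact (le_div_iff₀' (hk1 k)).1 h2
    have hdec : sc (k+1) x - ((((k+1):ℕ):ℝ)+1) * Vst x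
        = (sc (k+1) x - ((k:ℝ)+1) * Finset.univ.sup' Finset.univ_nonempty (Qb k x))
          + ((k:ℝ)+1) * (Finset.univ.sup' Finset.univ_nonempty (Qb k x) - Vst x)
          + (- Vst x) := by
      push_cast; ring
    calc |sc (k+1) x - ((((k+1):ℕ):ℝ)+1) * Vst x|
        ≤ |(sc (k+1) x - ((k:ℝ)+1) * Finset.univ.sup' Finset.univ_nonempty (Qb k x))
          + ((k:ℝ)+1) * (Finset.univ.sup' Finset.univ_nonempty (Qb k x) - Vst x)|
          + |(- Vst x)| := by rw [hdec]; exact abs_add_le _ _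
      _ ≤ |sc (k+1) x - ((k:ℝ)+1) * Finset.univ.sup' Finset.univ_nonempty (Qb k x)|
          + |((k:ℝ)+1) * (Finset.univ.sup' Finset.univ_nonempty (Qb k x) - Vst x)|
          + |(- Vst x)| := by
            have := abs_add_le (sc (k+1) x - ((k:ℝ)+1) * Finset.univ.sup' Finset.univ_nonempty (Qb k x))
              (((k:ℝ)+1) * (Finset.univ.sup' Finset.univ_nonempty (Qb k x) - Vst x))
            linarith
      _ ≤ γ * w k + Cc := by
            rw [abs_neg, hCcdef]
            linarith
  -- w is bounded
  set Bb : ℝ := max (w 0) (Cc/(1-γ)) with hBbdef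
  have hBnn : 0 ≤ Bb := le_trans (hwnn 0) (le_max_left _ _)
  have hwB : ∀ k, w k ≤ Bb := by
    intro k
    induction k with
    | zero => exact le_max_left _ _
    | succ n ih =>
      have h1 := hwrec n
      have hCB : Cc/(1-γ) ≤ Bb := le_max_right _ _
      have hC1 : Cc ≤ Bb*(1-γ) := (div_le_iff₀ h1γ).1 hCB
      nlinarith [mul_le_mul_of_nonneg_left ih hγ0]
  -- policy quality
  have hδbound : ∀ k x, Vst x - ∑ a, pol (k+1) x a * Qstar x a
      ≤ (2*(Vmax + γ*Bb) + Lc/η) / ((k:ℝ)+1) := by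
    intro k x
    have hβpos : 0 < η * ((k:ℝ)+1) := by positivity
    have hG : Finset.univ.sup' Finset.univ_nonempty (Qb k x) - Lc/(η*((k:ℝ)+1))
        ≤ ∑ a, pol (k+1) x a * Qb k x a := by
      rw [Finset.sum_congr rfl fun a _ => by rw [hpolQ k x a]]
      exact DPP.softmax_gap (η*((k:ℝ)+1)) hβpos (Qb k x)
    have hD : |∑ a, pol (k+1) x a * (Qstar x a - Qb k x a)| ≤ (Vmax + γ * w k)/((k:ℝ)+1) :=
      DPP.abs_weighted_le _ _ (hpol0 (k+1) x) (hpol1 (k+1) x) _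
        (fun a => by rw [abs_sub_comm]; exact hQbQ k x a)
    have hsplit : ∑ a, pol (k+1) x a * Qstar x a
        = (∑ a, pol (k+1) x a * Qb k x a) + ∑ a, pol (k+1) x a * (Qstar x a - Qb k x a) := by
      rw [← Finset.sum_add_distrib]
      exact Finset.sum_congr rfl fun a _ => by ring
    have hm := hmQ k x
    have hD' := abs_le.1 hD
    have hm' := abs_le.1 hm
    have hq : (Vmax + γ * w k)/((k:ℝ)+1) ≤ (Vmax + γ * Bb)/((k:ℝ)+1) := by
      have h5 : Vmax + γ * w k ≤ Vmax + γ * Bb := by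
        nlinarith [mul_le_mul_of_nonneg_left (hwB k) hγ0]
      rw [div_le_div_iff_of_pos_right (hk1 k)]
      exact h5
    have e1 : (Lc/η)/((k:ℝ)+1) = Lc/(η*((k:ℝ)+1)) := div_div Lc η ((k:ℝ)+1)
    have e2 : (2*(Vmax + γ*Bb) + Lc/η) / ((k:ℝ)+1)
        = 2*((Vmax + γ*Bb)/((k:ℝ)+1)) + (Lc/η)/((k:ℝ)+1) := by ring
    rw [e2, e1]
    linarith [hsplit, hG, hD'.1, hm'.2, hq]
  -- assemble: Qpi (k+1) is close to Qstar
  have hδnn : ∀ k:ℕ, 0 ≤ (2*(Vmax + γ*Bb) + Lc/η) / ((k:ℝ)+1) := by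
    intro k
    have h6 : 0 ≤ Vmax + γ*Bb := by nlinarith
    have h7 : 0 ≤ Lc/η := by positivity
    have := hk1 k
    positivity
  have herr : ∀ k x a, |Qpi (k+1) x a - Qstar x a|
      ≤ γ * ((2*(Vmax + γ*Bb) + Lc/η) / ((k:ℝ)+1)) / (1-γ) := by
    intro k
    refine DPP.qpi_err P hP0 hP1 r γ hγ0 hγ1 Qstar hQstar (pol (k+1)) (hpol0 (k+1))
      (hpol1 (k+1)) (Qpi (k+1)) (hQpi (k+1)) _ (hδnn k) ?_
    intro x
    exact hδbound k x
  intro x a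
  have hg : Tendsto (fun k:ℕ => γ * ((2*(Vmax + γ*Bb) + Lc/η) / ((k:ℝ)+1)) / (1-γ))
      atTop (nhds 0) := by
    have h0 := tendsto_one_div_add_atTop_nhds_zero_nat (𝕜 := ℝ)
    have heq : (fun k:ℕ => γ * ((2*(Vmax + γ*Bb) + Lc/η) / ((k:ℝ)+1)) / (1-γ))
        = fun k:ℕ => (γ * (2*(Vmax + γ*Bb) + Lc/η) / (1-γ)) * (1/((k:ℝ)+1)) := by
      funext k
      field_simp
    rw [heq]
    simpa using h0.const_mul (γ * (2*(Vmax + γ*Bb) + Lc/η) / (1-γ))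
  have hshift : Tendsto (fun k => Qpi (k+1) x a - Qstar x a) atTop (nhds 0) :=
    squeeze_zero_norm (fun k => herr k x a) hg
  have hfin := tendsto_sub_nhds_zero_iff.1 hshift
  exact (tendsto_add_atTop_iff_nat 1).1 hfin
end

section
/- Consider the approximate DPP iteration with parameter η > 0 started from Ψ_0 with ‖Ψ_0‖ ≤ V_max, with error functions ε_k and accumulated errors E_k = Σ_{j=0}^k ε_j. Then for every integer k ≥ 0, the policy π_k induced at round k satisfies ‖Q* − Q^{π_k}‖ ≤ (1 / ((1−γ)(k+1))) [ 2γ(4 V_max + log(L)/η)/(1−γ) + 2 Σ_{j=0}^{k} γ^{k−j} ‖E_j‖ ]. -/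
open Finset Real Filter

variable {X A : Type*}

set_option linter.unusedSectionVars false
set_option linter.unusedVariables false
set_option maxHeartbeats 1000000

section helpers
variable {ι : Type*} [Fintype ι] [Nonempty ι]

lemma sum_weight_le_sup' (p f : ι → ℝ) (hp : ∀ i, 0 ≤ p i) (hp1 : ∑ i, p i = 1) :
    ∑ i, p i * f i ≤ Finset.univ.sup' Finset.univ_nonempty f := by
  calc ∑ i, p i * f i ≤ ∑ i, p i * (Finset.univ.sup' Finset.univ_nonempty f) := by
        apply Finset.sum_le_sum; intro i _
        exact mul_le_mul_of_nonneg_left (Finset.le_sup' f (mem_univ i)) (hp i)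
    _ = _ := by rw [← Finset.sum_mul, hp1, one_mul]

lemma sum_weight_le (p f : ι → ℝ) (hp : ∀ i, 0 ≤ p i) (hp1 : ∑ i, p i = 1)
    (M : ℝ) (hM : ∀ i, f i ≤ M) : ∑ i, p i * f i ≤ M := by
  calc ∑ i, p i * f i ≤ ∑ i, p i * M := by
        apply Finset.sum_le_sum; intro i _
        exact mul_le_mul_of_nonneg_left (hM i) (hp i)
    _ = M := by rw [← Finset.sum_mul, hp1, one_mul]

lemma le_sum_weight (p f : ι → ℝ) (hp : ∀ i, 0 ≤ p i) (hp1 : ∑ i, p i = 1)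
    (M : ℝ) (hM : ∀ i, M ≤ f i) : M ≤ ∑ i, p i * f i := by
  have := sum_weight_le p (fun i => -f i) hp hp1 (-M) (fun i => by simpa using hM i)
  simp only [mul_neg, Finset.sum_neg_distrib] at this
  linarith [this]

lemma abs_sum_weight_le (p f : ι → ℝ) (hp : ∀ i, 0 ≤ p i) (hp1 : ∑ i, p i = 1)
    (M : ℝ) (hM : ∀ i, |f i| ≤ M) : |∑ i, p i * f i| ≤ M := by
  rw [abs_le]
  constructor
  · exact le_sum_weight p f hp hp1 (-M) (fun i => neg_le_of_abs_le (hM i))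
  · exact sum_weight_le p f hp hp1 M (fun i => le_of_abs_le (hM i))

lemma softmax_weight_sum (η : ℝ) (f : ι → ℝ) :
    ∑ i, Real.exp (η * f i) / ∑ j, Real.exp (η * f j) = 1 := by
  rw [← Finset.sum_div]
  exact div_self (ne_of_gt (Finset.sum_pos (fun j _ => Real.exp_pos _) univ_nonempty))

/-- Gibbs/entropy bound: softmax average is at least max minus log(card)/η. -/
lemma sup'_sub_le_softmax_avg (η : ℝ) (hη : 0 < η) (f : ι → ℝ) :
    Finset.univ.sup' Finset.univ_nonempty f - Real.log (Fintype.card ι) / η ≤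
      ∑ i, (Real.exp (η * f i) / ∑ j, Real.exp (η * f j)) * f i := by
  set Z : ℝ := ∑ j, Real.exp (η * f j) with hZ
  have hZpos : 0 < Z := Finset.sum_pos (fun j _ => Real.exp_pos _) univ_nonempty
  set w : ι → ℝ := fun i => Real.exp (η * f i) / Z with hw
  have hwpos : ∀ i, 0 < w i := fun i => div_pos (Real.exp_pos _) hZpos
  have hwsum : ∑ i, w i = 1 := softmax_weight_sum η f
  have hcard : (0:ℝ) < (Fintype.card ι : ℝ) := by
    exact_mod_cast Fintype.card_pos
  have hent : -Real.log (Fintype.card ι) ≤ ∑ i, w i * Real.log (w i) := by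
    have h1 : ∀ i, w i * (-Real.log (w i)) ≤ 1 / (Fintype.card ι) - w i + w i * Real.log (Fintype.card ι) := by
      intro i
      have hx : 0 < 1 / ((Fintype.card ι : ℝ) * w i) := by positivity
      have hlog : Real.log (1 / ((Fintype.card ι : ℝ) * w i)) ≤ 1 / ((Fintype.card ι : ℝ) * w i) - 1 :=
        Real.log_le_sub_one_of_pos hx
      have hsplit : Real.log (1 / ((Fintype.card ι : ℝ) * w i)) =
          -Real.log (Fintype.card ι) - Real.log (w i) := by
        rw [one_div, Real.log_inv, Real.log_mul (ne_of_gt hcard) (ne_of_gt (hwpos i))]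
        ring
      have h2 : -Real.log (w i) ≤ 1 / ((Fintype.card ι : ℝ) * w i) - 1 + Real.log (Fintype.card ι) := by
        rw [hsplit] at hlog; linarith
      have h3 : w i * (-Real.log (w i)) ≤ w i * (1 / ((Fintype.card ι : ℝ) * w i) - 1 + Real.log (Fintype.card ι)) :=
        mul_le_mul_of_nonneg_left h2 (le_of_lt (hwpos i))
      have h4 : w i * (1 / ((Fintype.card ι : ℝ) * w i)) = 1 / (Fintype.card ι : ℝ) := by
        rw [mul_one_div, mul_comm ((Fintype.card ι : ℝ)) (w i), div_mul_eq_div_div,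
          div_self (ne_of_gt (hwpos i))]
      calc w i * (-Real.log (w i)) ≤ w i * (1 / ((Fintype.card ι : ℝ) * w i) - 1 + Real.log (Fintype.card ι)) := h3
        _ = 1 / (Fintype.card ι : ℝ) - w i + w i * Real.log (Fintype.card ι) := by
            rw [mul_add, mul_sub, h4]; ring
    have h5 : ∑ i, w i * (-Real.log (w i)) ≤
        ∑ i, (1 / (Fintype.card ι : ℝ) - w i + w i * Real.log (Fintype.card ι)) :=
      Finset.sum_le_sum (fun i _ => h1 i)
    have h6 : ∑ i, (1 / (Fintype.card ι : ℝ) - w i + w i * Real.log (Fintype.card ι)) =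
        Real.log (Fintype.card ι) := by
      rw [Finset.sum_add_distrib, Finset.sum_sub_distrib, ← Finset.sum_mul, hwsum]
      simp [Finset.sum_const, Finset.card_univ, mul_one_div, div_self (ne_of_gt hcard)]
    have h7 : ∑ i, w i * (-Real.log (w i)) = -∑ i, w i * Real.log (w i) := by
      simp [mul_neg]
    rw [h7] at h5; rw [h6] at h5; linarith
  have hkey : ∑ i, w i * (η * f i) = (∑ i, w i * Real.log (w i)) + Real.log Z := by
    have hlogw : ∀ i, η * f i = Real.log (w i) + Real.log Z := by
      intro i
      have : Real.log (w i) = η * f i - Real.log Z := by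
        rw [hw]
        simp only
        rw [Real.log_div (ne_of_gt (Real.exp_pos _)) (ne_of_gt hZpos), Real.log_exp]
      linarith [this]
    calc ∑ i, w i * (η * f i) = ∑ i, (w i * Real.log (w i) + w i * Real.log Z) := by
          apply Finset.sum_congr rfl; intro i _; rw [hlogw i]; ring
      _ = (∑ i, w i * Real.log (w i)) + Real.log Z := by
          rw [Finset.sum_add_distrib, ← Finset.sum_mul, hwsum, one_mul]
  have hZge : η * Finset.univ.sup' Finset.univ_nonempty f ≤ Real.log Z := by
    obtain ⟨i0, _, hi0⟩ := Finset.exists_mem_eq_sup' (Finset.univ_nonempty) f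
    have h8 : Real.exp (η * f i0) ≤ Z :=
      Finset.single_le_sum (f := fun j => Real.exp (η * f j)) (fun j _ => le_of_lt (Real.exp_pos _)) (mem_univ i0)
    have h9 := Real.log_le_log (Real.exp_pos _) h8
    rw [Real.log_exp] at h9
    rw [hi0]; exact h9
  have hfinal : η * Finset.univ.sup' Finset.univ_nonempty f - Real.log (Fintype.card ι) ≤
      ∑ i, w i * (η * f i) := by
    rw [hkey]; linarith
  have hrw : ∑ i, w i * (η * f i) = η * ∑ i, w i * f i := by
    rw [Finset.mul_sum]; apply Finset.sum_congr rfl; intro i _; ring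
  rw [hrw] at hfinal
  rw [sub_le_iff_le_add] at hfinal ⊢
  rw [← mul_le_mul_iff_right₀ hη, mul_add, mul_div_cancel₀ _ (ne_of_gt hη)]
  exact hfinal

end helpers

/-- Theorem 3 of the paper: `ℓ∞`-norm performance-loss bound of approximate DPP. -/
theorem approx_dpp_performance_loss_bound
    {X A : Type*} [Fintype X] [Fintype A] [Nonempty X] [Nonempty A]
    (P : X → A → X → ℝ) (hP0 : ∀ x a x', 0 ≤ P x a x') (hP1 : ∀ x a, ∑ x', P x a x' = 1)
    (r : X → A → ℝ) (Rmax : ℝ) (hR : 0 < Rmax) (hr : ∀ x a, |r x a| ≤ Rmax)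
    (γ : ℝ) (hγ0 : 0 ≤ γ) (hγ1 : γ < 1)
    (Vmax : ℝ) (hV : Vmax = Rmax / (1 - γ))
    (η : ℝ) (hη : 0 < η)
    (ε : ℕ → X → A → ℝ)
    (E : ℕ → X → A → ℝ)
    (hE : ∀ k x a, E k x a = ∑ j ∈ Finset.range (k + 1), ε j x a)
    (Ψ : ℕ → X → A → ℝ) (hΨ0 : supNorm (Ψ 0) ≤ Vmax)
    (pol : ℕ → X → A → ℝ) (hpol : ∀ k, pol k = softmaxPol η (Ψ k))
    (hΨ : ∀ k x a, Ψ (k + 1) x a =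
      Ψ k x a + bellman P r γ (pol k) (Ψ k) x a - polApply (pol k) (Ψ k) x + ε k x a)
    (Qstar : X → A → ℝ) (hQstar : bellmanOpt P r γ Qstar = Qstar)
    (Qpi : ℕ → X → A → ℝ) (hQpi : ∀ k, bellman P r γ (pol k) (Qpi k) = Qpi k) :
    ∀ k : ℕ, supNorm (fun x a => Qstar x a - Qpi k x a) ≤
      (1 / ((1 - γ) * ((k : ℝ) + 1))) *
        (2 * γ * (4 * Vmax + Real.log (Fintype.card A) / η) / (1 - γ) +
          2 * ∑ j ∈ Finset.range (k + 1), γ ^ (k - j) * supNorm (E j)) := by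
  have hγ' : (0:ℝ) < 1 - γ := by linarith
  set c : ℝ := Real.log (Fintype.card A) / η with hc
  have hc0 : 0 ≤ c := by
    apply div_nonneg _ (le_of_lt hη)
    apply Real.log_nonneg
    exact_mod_cast Fintype.card_pos (α := A)
  have hVmax0 : 0 < Vmax := by rw [hV]; positivity
  -- basic supNorm facts
  have habs : ∀ (Q : X → A → ℝ) (x : X) (a : A), |Q x a| ≤ supNorm Q := by
    intro Q x a
    exact Finset.le_sup' (fun p : X × A => |Q p.1 p.2|) (Finset.mem_univ (x, a))
  have hsupNN : ∀ (Q : X → A → ℝ), 0 ≤ supNorm Q := by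
    intro Q
    obtain ⟨x⟩ := ‹Nonempty X›; obtain ⟨a⟩ := ‹Nonempty A›
    exact le_trans (abs_nonneg _) (habs Q x a)
  -- policy facts
  have hpol0 : ∀ k x a, 0 ≤ pol k x a := by
    intro k x a; rw [hpol]
    exact le_of_lt (div_pos (Real.exp_pos _) (Finset.sum_pos (fun j _ => Real.exp_pos _) univ_nonempty))
  have hpolsum : ∀ k x, ∑ a, pol k x a = 1 := by
    intro k x; rw [hpol]; exact softmax_weight_sum η (Ψ k x)
  -- notations
  set Vs : X → ℝ := fun x => Finset.univ.sup' Finset.univ_nonempty (Qstar x) with hVs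
  set m : ℕ → X → ℝ := fun k => polApply (pol k) (Ψ k) with hm
  set D : ℕ → X → ℝ := fun k x => ∑ j ∈ Finset.range (k + 1), (Vs x - m j x) with hD
  -- softmax value bounds
  have hm_le : ∀ k x, m k x ≤ Finset.univ.sup' Finset.univ_nonempty (Ψ k x) := by
    intro k x
    show polApply (pol k) (Ψ k) x ≤ _
    exact sum_weight_le_sup' (pol k x) (Ψ k x) (hpol0 k x) (hpolsum k x)
  have hm_ge : ∀ k x, Finset.univ.sup' Finset.univ_nonempty (Ψ k x) - c ≤ m k x := by
    intro k x
    have h := sup'_sub_le_softmax_avg η hη (Ψ k x)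
    show _ ≤ polApply (pol k) (Ψ k) x
    simp only [polApply, hpol, softmaxPol]
    exact h
  -- Q* bound
  have hQfix : ∀ x a, Qstar x a = r x a + γ * ∑ x', P x a x' * Vs x' := by
    intro x a
    conv_lhs => rw [← hQstar]
    rfl
  have hQb : ∀ x a, |Qstar x a| ≤ Vmax := by
    have hN : supNorm Qstar ≤ Vmax := by
      have hVsb : ∀ x', |Vs x'| ≤ supNorm Qstar := by
        intro x'
        rw [abs_le]
        constructor
        · obtain ⟨a⟩ := ‹Nonempty A›
          calc -supNorm Qstar ≤ Qstar x' a := neg_le_of_abs_le (habs _ x' a)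
            _ ≤ Vs x' := Finset.le_sup' _ (Finset.mem_univ a)
        · apply Finset.sup'_le
          intro a _
          exact le_of_abs_le (habs _ x' a)
      have step : supNorm Qstar ≤ Rmax + γ * supNorm Qstar := by
        apply Finset.sup'_le
        rintro ⟨x, a⟩ _
        simp only
        rw [hQfix x a]
        calc |r x a + γ * ∑ x', P x a x' * Vs x'| ≤ |r x a| + |γ * ∑ x', P x a x' * Vs x'| := abs_add_le _ _
          _ ≤ Rmax + γ * supNorm Qstar := by
            apply add_le_add (hr x a)
            rw [abs_mul, abs_of_nonneg hγ0]
            exact mul_le_mul_of_nonneg_left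
              (abs_sum_weight_le (P x a) Vs (hP0 x a) (hP1 x a) _ hVsb) hγ0
      rw [hV, le_div_iff₀ hγ']
      nlinarith [step]
    intro x a; exact le_trans (habs _ x a) hN
  have hVsub : ∀ x, |Vs x| ≤ Vmax := by
    intro x
    rw [abs_le]
    constructor
    · obtain ⟨a⟩ := ‹Nonempty A›
      calc -Vmax ≤ Qstar x a := neg_le_of_abs_le (hQb x a)
        _ ≤ Vs x := Finset.le_sup' _ (Finset.mem_univ a)
    · exact Finset.sup'_le _ _ (fun a _ => le_of_abs_le (hQb x a))
  have hΨ0b : ∀ x a, |Ψ 0 x a| ≤ Vmax := fun x a => le_trans (habs _ x a) hΨ0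
  have hsupΨ0le : ∀ x, Finset.univ.sup' Finset.univ_nonempty (Ψ 0 x) ≤ Vmax :=
    fun x => Finset.sup'_le _ _ (fun a _ => le_of_abs_le (hΨ0b x a))
  have hsupΨ0ge : ∀ x, -Vmax ≤ Finset.univ.sup' Finset.univ_nonempty (Ψ 0 x) := by
    intro x
    obtain ⟨a⟩ := ‹Nonempty A›
    exact le_trans (neg_le_of_abs_le (hΨ0b x a)) (Finset.le_sup' _ (Finset.mem_univ a))
  -- bellman rewriting
  have hbell : ∀ k x a, bellman P r γ (pol k) (Ψ k) x a =
      r x a + γ * ∑ x', P x a x' * m k x' := by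
    intro k x a
    simp only [bellman, hm, polApply]
    congr 2
    apply Finset.sum_congr rfl
    intro x' _
    rw [Finset.mul_sum]
    apply Finset.sum_congr rfl
    intro a' _
    ring
  -- key unrolled identity
  have hkey : ∀ k x a, Ψ (k + 1) x a = ((k : ℝ) + 1) * (Qstar x a - Vs x) + Ψ 0 x a + E k x a
      - γ * (∑ x', P x a x' * D k x') + D k x := by
    have hmdef : ∀ k x, polApply (pol k) (Ψ k) x = m k x := fun _ _ => rfl
    have hD0 : ∀ x', D 0 x' = Vs x' - m 0 x' := by
      intro x'; rw [hD]; simp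
    have hDs : ∀ k x', D (k+1) x' = D k x' + (Vs x' - m (k+1) x') := by
      intro k x'; rw [hD]; simp only; rw [Finset.sum_range_succ]
    intro k
    induction k with
    | zero =>
      intro x a
      rw [hΨ 0 x a, hbell 0 x a, hmdef]
      have hE0 : E 0 x a = ε 0 x a := by rw [hE]; simp
      have hsub : ∑ x', P x a x' * D 0 x' =
          (∑ x', P x a x' * Vs x') - ∑ x', P x a x' * m 0 x' := by
        rw [← Finset.sum_sub_distrib]
        apply Finset.sum_congr rfl
        intro x' _
        rw [hD0 x', mul_sub]
      rw [hE0, hD0 x, hsub, hQfix x a]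
      push_cast
      ring
    | succ k ih =>
      intro x a
      rw [hΨ (k+1) x a, hbell (k+1) x a, hmdef, ih x a]
      have hEs : E (k+1) x a = E k x a + ε (k+1) x a := by
        rw [hE, hE, Finset.sum_range_succ]
      have hsub : ∑ x', P x a x' * D (k+1) x' = (∑ x', P x a x' * D k x')
          + ((∑ x', P x a x' * Vs x') - ∑ x', P x a x' * m (k+1) x') := by
        have hterm : ∀ x' ∈ Finset.univ, P x a x' * D (k+1) x' =
            P x a x' * D k x' + (P x a x' * Vs x' - P x a x' * m (k+1) x') := by
          intro x' _; rw [hDs k x']; ring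
        rw [Finset.sum_congr rfl hterm, Finset.sum_add_distrib, Finset.sum_sub_distrib]
      rw [hEs, hDs k x, hsub, hQfix x a]
      push_cast
      ring
  have hDs : ∀ k x', D (k+1) x' = D k x' + (Vs x' - m (k+1) x') := by
    intro k x'; rw [hD]; simp only; rw [Finset.sum_range_succ]
  have hD0 : ∀ x', D 0 x' = Vs x' - m 0 x' := by
    intro x'; rw [hD]; simp
  set o : ℕ → ℝ := fun k =>
    Finset.univ.sup' Finset.univ_nonempty (fun p : X × X => D k p.1 - D k p.2) with ho
  have hPDosc : ∀ k (x : X) (a : A) (y : X) (b : A),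
      (∑ x', P x a x' * D k x') - (∑ x', P y b x' * D k x') ≤ o k := by
    intro k x a y b
    obtain ⟨x1, _, hx1⟩ := Finset.exists_mem_eq_sup' (Finset.univ_nonempty (α := X)) (D k)
    obtain ⟨x2, _, hx2⟩ := Finset.exists_mem_eq_inf' (Finset.univ_nonempty (α := X)) (D k)
    have h1 : ∑ x', P x a x' * D k x' ≤ D k x1 := by
      rw [← hx1]
      exact sum_weight_le (P x a) (D k) (hP0 x a) (hP1 x a) _
        (fun i => Finset.le_sup' _ (mem_univ i))
    have h2 : D k x2 ≤ ∑ x', P y b x' * D k x' := by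
      rw [← hx2]
      exact le_sum_weight (P y b) (D k) (hP0 y b) (hP1 y b) _
        (fun i => Finset.inf'_le _ (mem_univ i))
    have h3 : D k x1 - D k x2 ≤ o k := by
      rw [ho]
      exact Finset.le_sup' (fun p : X × X => D k p.1 - D k p.2) (Finset.mem_univ (x1, x2))
    linarith
  have ho0 : o 0 ≤ 4 * Vmax + c := by
    apply Finset.sup'_le
    rintro ⟨x, y⟩ _
    simp only
    rw [hD0 x, hD0 y]
    have h1 : m 0 y ≤ Vmax := le_trans (hm_le 0 y) (hsupΨ0le y)
    have h2 : -Vmax - c ≤ m 0 x := by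
      have ha := hm_ge 0 x; have hb := hsupΨ0ge x; linarith
    have h3 := le_of_abs_le (hVsub x); have h4 := neg_le_of_abs_le (hVsub y)
    linarith
  have horec : ∀ k, o (k+1) ≤ γ * o k + (4 * Vmax + c + 2 * supNorm (E k)) := by
    intro k
    apply Finset.sup'_le
    rintro ⟨x, y⟩ _
    simp only
    obtain ⟨astar, _, hastar⟩ := Finset.exists_mem_eq_sup' (Finset.univ_nonempty (α := A)) (Qstar x)
    -- upper bound on D (k+1) x
    have hup : D (k+1) x ≤ Vs x - Ψ 0 x astar - E k x astar
        + γ * (∑ x', P x astar x' * D k x') + c := by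
      have h2 := hkey k x astar
      rw [show Qstar x astar = Vs x from hastar.symm] at h2
      have h3 : Ψ (k+1) x astar = Ψ 0 x astar + E k x astar
          - γ * (∑ x', P x astar x' * D k x') + D k x := by rw [h2]; ring
      have h4 : Ψ (k+1) x astar ≤ Finset.univ.sup' Finset.univ_nonempty (Ψ (k+1) x) :=
        Finset.le_sup' _ (Finset.mem_univ astar)
      have h5 := hm_ge (k+1) x
      rw [hDs k x]
      linarith
    -- lower bound on D (k+1) y
    obtain ⟨b0, _, hb0⟩ := Finset.exists_mem_eq_sup' (Finset.univ_nonempty (α := A)) (Ψ (k+1) y)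
    have hlow : Vs y - Ψ 0 y b0 - E k y b0 + γ * (∑ x', P y b0 x' * D k x') ≤ D (k+1) y := by
      have h2 := hkey k y b0
      have h6 : ((k:ℝ) + 1) * (Qstar y b0 - Vs y) ≤ 0 := by
        apply mul_nonpos_of_nonneg_of_nonpos
        · positivity
        · have : Qstar y b0 ≤ Vs y := Finset.le_sup' _ (Finset.mem_univ b0)
          linarith
      have h7 : m (k+1) y ≤ Ψ (k+1) y b0 := by
        rw [← hb0]; exact hm_le (k+1) y
      rw [hDs k y]
      linarith
    have hosc := hPDosc k x astar y b0
    have e1 := le_of_abs_le (hVsub x); have e2 := neg_le_of_abs_le (hVsub y)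
    have e3 := neg_le_of_abs_le (hΨ0b x astar); have e4 := le_of_abs_le (hΨ0b y b0)
    have e5 := neg_le_of_abs_le (habs (E k) x astar); have e6 := le_of_abs_le (habs (E k) y b0)
    nlinarith [mul_le_mul_of_nonneg_left hosc hγ0]
  have hObound : ∀ k, o k ≤ (4 * Vmax + c) / (1 - γ)
      + 2 * ∑ i ∈ Finset.range k, γ ^ (k - 1 - i) * supNorm (E i) := by
    intro k
    induction k with
    | zero =>
      simp only [Finset.range_zero, Finset.sum_empty, mul_zero, add_zero]
      calc o 0 ≤ 4 * Vmax + c := ho0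
        _ ≤ (4 * Vmax + c) / (1 - γ) := by
          rw [le_div_iff₀ hγ']
          nlinarith
    | succ k ih =>
      have h := horec k
      have hmono : γ * o k ≤ γ * ((4 * Vmax + c) / (1 - γ)
          + 2 * ∑ i ∈ Finset.range k, γ ^ (k - 1 - i) * supNorm (E i)) :=
        mul_le_mul_of_nonneg_left ih hγ0
      have hγpow : γ * ∑ i ∈ Finset.range k, γ ^ (k - 1 - i) * supNorm (E i)
          = ∑ i ∈ Finset.range k, γ ^ (k - i) * supNorm (E i) := by
        rw [Finset.mul_sum]
        apply Finset.sum_congr rfl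
        intro i hi
        have hik : i < k := Finset.mem_range.1 hi
        have : k - i = (k - 1 - i) + 1 := by omega
        rw [this, pow_succ]; ring
      have hfield : γ * ((4 * Vmax + c) / (1 - γ)) + (4 * Vmax + c)
          = (4 * Vmax + c) / (1 - γ) := by
        field_simp
        ring
      have hsum : ∑ i ∈ Finset.range (k+1), γ ^ (k + 1 - 1 - i) * supNorm (E i)
          = (∑ i ∈ Finset.range k, γ ^ (k - i) * supNorm (E i)) + supNorm (E k) := by
        rw [Finset.sum_range_succ]
        simp
      calc o (k+1) ≤ γ * o k + (4 * Vmax + c + 2 * supNorm (E k)) := h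
        _ ≤ γ * ((4 * Vmax + c) / (1 - γ)
            + 2 * ∑ i ∈ Finset.range k, γ ^ (k - 1 - i) * supNorm (E i))
            + (4 * Vmax + c + 2 * supNorm (E k)) := by linarith
        _ = (4 * Vmax + c) / (1 - γ)
            + 2 * ∑ i ∈ Finset.range (k+1), γ ^ (k + 1 - 1 - i) * supNorm (E i) := by
          rw [hsum, mul_add]
          have h2 : γ * (2 * ∑ i ∈ Finset.range k, γ ^ (k - 1 - i) * supNorm (E i))
              = 2 * ∑ i ∈ Finset.range k, γ ^ (k - i) * supNorm (E i) := by
            rw [← hγpow]; ring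
          rw [h2]
          linarith [hfield]
  -- policy value quantities
  set pQ : ℕ → X → ℝ := fun k x => ∑ a, pol k x a * Qstar x a with hpQ
  have hpQ0 : ∀ k x, 0 ≤ Vs x - pQ k x := by
    intro k x
    have h := sum_weight_le_sup' (pol k x) (Qstar x) (hpol0 k x) (hpolsum k x)
    rw [hpQ]; simp only
    rw [hVs]; simp only
    linarith
  have hpQ2V : ∀ k x, Vs x - pQ k x ≤ 2 * Vmax := by
    intro k x
    have h1 : -Vmax ≤ pQ k x := by
      rw [hpQ]; simp only
      exact le_sum_weight (pol k x) (Qstar x) (hpol0 k x) (hpolsum k x) _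
        (fun a => neg_le_of_abs_le (hQb x a))
    have h2 := le_of_abs_le (hVsub x)
    linarith
  have hXkb : ∀ (k : ℕ) (x : X), ((k:ℝ) + 1) * (Vs x - pQ (k+1) x) ≤
      c + 2 * Vmax + 2 * supNorm (E k) + γ * o k := by
    intro k x
    obtain ⟨astar, _, hastar⟩ := Finset.exists_mem_eq_sup' (Finset.univ_nonempty (α := A)) (Qstar x)
    set W : A → ℝ := fun a => Ψ 0 x a + E k x a - γ * ∑ x', P x a x' * D k x' with hW
    have hWkey : ∀ a, ((k:ℝ)+1) * (Vs x - Qstar x a) = -(Ψ (k+1) x a) + W a + D k x := by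
      intro a
      simp only [hW]
      rw [hkey k x a]
      ring
    have e3 : ∑ a, pol (k+1) x a * (-(Ψ (k+1) x a)) = -(m (k+1) x) := by
      rw [hm]; simp only [polApply]
      rw [← Finset.sum_neg_distrib]
      apply Finset.sum_congr rfl
      intro a _; ring
    have e4 : ∑ a, pol (k+1) x a * D k x = D k x := by
      rw [← Finset.sum_mul, hpolsum, one_mul]
    have hsum1 : ((k:ℝ)+1) * (Vs x - pQ (k+1) x) =
        -(m (k+1) x) + (∑ a, pol (k+1) x a * W a) + D k x := by
      have e1 : ∀ a ∈ Finset.univ, pol (k+1) x a * (((k:ℝ)+1) * (Vs x - Qstar x a)) =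
          pol (k+1) x a * (-(Ψ (k+1) x a)) + pol (k+1) x a * W a
            + pol (k+1) x a * D k x := by
        intro a _; rw [hWkey a]; ring
      have e2 : ∑ a, pol (k+1) x a * (((k:ℝ)+1) * (Vs x - Qstar x a)) =
          ((k:ℝ)+1) * (Vs x - pQ (k+1) x) := by
        have e2a : ∀ a ∈ Finset.univ, pol (k+1) x a * (((k:ℝ)+1) * (Vs x - Qstar x a)) =
            ((k:ℝ)+1) * (pol (k+1) x a * Vs x - pol (k+1) x a * Qstar x a) := by
          intro a _; ring
        rw [Finset.sum_congr rfl e2a, ← Finset.mul_sum, Finset.sum_sub_distrib,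
          ← Finset.sum_mul, hpolsum, one_mul]
      rw [← e2, Finset.sum_congr rfl e1, Finset.sum_add_distrib, Finset.sum_add_distrib, e3, e4]
    rw [hsum1]
    obtain ⟨b0, _, hb0⟩ := Finset.exists_mem_eq_sup' (Finset.univ_nonempty (α := A)) W
    have h2 : ∑ a, pol (k+1) x a * W a ≤ W b0 := by
      have h := sum_weight_le_sup' (pol (k+1) x) W (hpol0 (k+1) x) (hpolsum (k+1) x)
      rw [hb0] at h; exact h
    have h3 : Ψ (k+1) x astar - c ≤ m (k+1) x := by
      have ha := hm_ge (k+1) x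
      have hb : Ψ (k+1) x astar ≤ Finset.univ.sup' Finset.univ_nonempty (Ψ (k+1) x) :=
        Finset.le_sup' _ (Finset.mem_univ astar)
      linarith
    have h4 : Ψ (k+1) x astar = W astar + D k x := by
      have h := hWkey astar
      rw [show Qstar x astar = Vs x from hastar.symm, sub_self, mul_zero] at h
      linarith
    have h5 : W b0 - W astar ≤ 2 * Vmax + 2 * supNorm (E k) + γ * o k := by
      rw [hW]; simp only
      have hosc := hPDosc k x astar x b0
      have e5 := le_of_abs_le (hΨ0b x b0); have e6 := neg_le_of_abs_le (hΨ0b x astar)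
      have e7 := le_of_abs_le (habs (E k) x b0); have e8 := neg_le_of_abs_le (habs (E k) x astar)
      nlinarith [mul_le_mul_of_nonneg_left hosc hγ0]
    linarith
  -- contraction argument
  have hcontr : ∀ k, supNorm (fun x a => Qstar x a - Qpi k x a) * (1 - γ) ≤
      γ * Finset.univ.sup' Finset.univ_nonempty (fun x => Vs x - pQ k x) := by
    intro k
    set Xk := Finset.univ.sup' Finset.univ_nonempty (fun x => Vs x - pQ k x) with hXkdef
    set N := supNorm (fun x a => Qstar x a - Qpi k x a) with hNdef
    have hXk_ub : ∀ x, Vs x - pQ k x ≤ Xk := fun x =>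
      Finset.le_sup' (fun x => Vs x - pQ k x) (Finset.mem_univ x)
    have key : N ≤ γ * (Xk + N) := by
      apply Finset.sup'_le
      rintro ⟨x, a⟩ _
      simp only
      have hQpieq : Qpi k x a = r x a
          + γ * ∑ x', P x a x' * (∑ a', pol k x' a' * Qpi k x' a') := by
        conv_lhs => rw [← hQpi k]
        simp only [bellman]
        congr 1
        congr 1
        apply Finset.sum_congr rfl
        intro x' _
        rw [Finset.mul_sum]
        apply Finset.sum_congr rfl
        intro a' _
        ring
      rw [hQfix x a, hQpieq]
      have hcomb : (r x a + γ * ∑ x', P x a x' * Vs x')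
          - (r x a + γ * ∑ x', P x a x' * (∑ a', pol k x' a' * Qpi k x' a'))
          = γ * ∑ x', P x a x' * (Vs x' - ∑ a', pol k x' a' * Qpi k x' a') := by
        rw [Finset.sum_congr rfl (fun x' _ => mul_sub (P x a x') _ _), Finset.sum_sub_distrib]
        ring
      rw [hcomb, abs_mul, abs_of_nonneg hγ0]
      apply mul_le_mul_of_nonneg_left _ hγ0
      apply abs_sum_weight_le (P x a) _ (hP0 x a) (hP1 x a)
      intro x'
      have hsplit : Vs x' - ∑ a', pol k x' a' * Qpi k x' a'
          = (Vs x' - pQ k x') + ∑ a', pol k x' a' * (Qstar x' a' - Qpi k x' a') := by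
        rw [Finset.sum_congr rfl (fun a' _ => mul_sub (pol k x' a') _ _), Finset.sum_sub_distrib]
        rw [hpQ]
        ring
      rw [hsplit]
      have h1 : |∑ a', pol k x' a' * (Qstar x' a' - Qpi k x' a')| ≤ N :=
        abs_sum_weight_le (pol k x') (fun a' => Qstar x' a' - Qpi k x' a')
          (hpol0 k x') (hpolsum k x') N
          (fun a' => habs (fun x a => Qstar x a - Qpi k x a) x' a')
      calc |(Vs x' - pQ k x') + ∑ a', pol k x' a' * (Qstar x' a' - Qpi k x' a')|
          ≤ |Vs x' - pQ k x'| + |∑ a', pol k x' a' * (Qstar x' a' - Qpi k x' a')| := abs_add_le _ _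
        _ ≤ Xk + N := by
          rw [abs_of_nonneg (hpQ0 k x')]
          exact add_le_add (hXk_ub x') h1
    nlinarith [key]
  -- final assembly
  intro k
  have hD' : (0:ℝ) < (1 - γ) * ((k:ℝ) + 1) := by positivity
  rw [one_div, ← div_eq_inv_mul, le_div_iff₀ hD']
  have hc1 := hcontr k
  set Xk := Finset.univ.sup' Finset.univ_nonempty (fun x => Vs x - pQ k x) with hXkdef
  obtain ⟨x0, _, hx0⟩ := Finset.exists_mem_eq_sup' (Finset.univ_nonempty (α := X))
    (fun x => Vs x - pQ k x)
  have hXx0 : Xk = Vs x0 - pQ k x0 := by rw [hXkdef, hx0]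
  have hB2 : γ * Xk * ((k:ℝ) + 1) ≤ 2 * γ * (4 * Vmax + c) / (1 - γ)
      + 2 * ∑ j ∈ Finset.range (k + 1), γ ^ (k - j) * supNorm (E j) := by
    cases k with
    | zero =>
      have h1 : Xk ≤ 2 * Vmax := by rw [hXx0]; exact hpQ2V 0 x0
      have hXnn : 0 ≤ Xk := by rw [hXx0]; exact hpQ0 0 x0
      have hsumnn : 0 ≤ ∑ j ∈ Finset.range 1, γ ^ (0 - j) * supNorm (E j) := by
        apply Finset.sum_nonneg; intro j _
        exact mul_nonneg (pow_nonneg hγ0 _) (hsupNN _)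
      have h3 : 2 * γ * Vmax ≤ 2 * γ * (4 * Vmax + c) / (1 - γ) := by
        rw [le_div_iff₀ hγ']
        nlinarith [mul_nonneg hγ0 (le_of_lt hVmax0), mul_nonneg (mul_nonneg hγ0 hγ0) (le_of_lt hVmax0), mul_nonneg hγ0 hc0]
      push_cast
      nlinarith
    | succ k' =>
      have h0 := hXkb k' x0
      have h1 : Xk ≤ 2 * Vmax := by rw [hXx0]; exact hpQ2V _ x0
      have hOb := hObound k'
      have e1 : γ * (((k':ℝ) + 1) * Xk) ≤ γ * (c + 2 * Vmax + 2 * supNorm (E k') + γ * o k') := by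
        apply mul_le_mul_of_nonneg_left _ hγ0
        rw [hXx0]; exact h0
      have e2 : γ * Xk ≤ γ * (2 * Vmax) := mul_le_mul_of_nonneg_left h1 hγ0
      have h4 : γ * γ * (∑ i ∈ Finset.range k', γ ^ (k' - 1 - i) * supNorm (E i))
          = ∑ i ∈ Finset.range k', γ ^ (k' + 1 - i) * supNorm (E i) := by
        rw [Finset.mul_sum]
        apply Finset.sum_congr rfl
        intro i hi
        have hik : i < k' := Finset.mem_range.1 hi
        have : k' + 1 - i = (k' - 1 - i) + 2 := by omega
        rw [this, pow_add]; ring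
      have e3 : γ * γ * o k' ≤ γ * γ * ((4 * Vmax + c) / (1 - γ))
          + 2 * ∑ i ∈ Finset.range k', γ ^ (k' + 1 - i) * supNorm (E i) := by
        have h5 : γ * γ * o k' ≤ γ * γ * ((4 * Vmax + c) / (1 - γ)
            + 2 * ∑ i ∈ Finset.range k', γ ^ (k' - 1 - i) * supNorm (E i)) :=
          mul_le_mul_of_nonneg_left hOb (by positivity)
        calc γ * γ * o k' ≤ _ := h5
          _ = γ * γ * ((4 * Vmax + c) / (1 - γ))
              + 2 * ∑ i ∈ Finset.range k', γ ^ (k' + 1 - i) * supNorm (E i) := by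
            rw [mul_add, ← h4]; ring
      have e4 : ∑ j ∈ Finset.range (k' + 1 + 1), γ ^ (k' + 1 - j) * supNorm (E j)
          = ∑ i ∈ Finset.range k', γ ^ (k' + 1 - i) * supNorm (E i)
            + γ * supNorm (E k') + supNorm (E (k' + 1)) := by
        rw [Finset.sum_range_succ, Finset.sum_range_succ]
        have hh1 : k' + 1 - k' = 1 := by omega
        have hh2 : k' + 1 - (k' + 1) = 0 := by omega
        rw [hh1, hh2, pow_one, pow_zero, one_mul]
      have e5 : γ * (4 * Vmax + c) + γ * γ * ((4 * Vmax + c) / (1 - γ))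
          = γ * ((4 * Vmax + c) / (1 - γ)) := by
        field_simp
        ring
      have e6 : 0 ≤ γ * ((4 * Vmax + c) / (1 - γ)) := by positivity
      have e7 : 0 ≤ supNorm (E (k' + 1)) := hsupNN _
      push_cast
      have e0 : γ * Xk * ((k':ℝ) + 1 + 1) = γ * (((k':ℝ) + 1) * Xk) + γ * Xk := by ring
      have e8 : 2 * γ * (4 * Vmax + c) / (1 - γ) = 2 * (γ * ((4 * Vmax + c) / (1 - γ))) := by
        ring
      rw [e0, e4, e8]
      linarith [e1, e2, e3, e5, e6, e7]
  calc supNorm (fun x a => Qstar x a - Qpi k x a) * ((1 - γ) * ((k:ℝ) + 1))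
      = (supNorm (fun x a => Qstar x a - Qpi k x a) * (1 - γ)) * ((k:ℝ) + 1) := by ring
    _ ≤ (γ * Xk) * ((k:ℝ) + 1) := by
        apply mul_le_mul_of_nonneg_right hc1 (by positivity)
    _ ≤ 2 * γ * (4 * Vmax + c) / (1 - γ)
        + 2 * ∑ j ∈ Finset.range (k + 1), γ ^ (k - j) * supNorm (E j) := hB2
end
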